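/- arXiv:1306.5074 — 5 statements merged into one kernel-verified Lean document; each statement's English description precedes it below -/
import Mathlib

section
/- Let A ∈ ℂ^{m×n}, B ∈ ℂ^{m×p1}, C ∈ ℂ^{m×p2}, D ∈ ℂ^{q1×n}, E ∈ ℂ^{q2×n} be given, and for X ∈ ℂ^{p1×q1} and Y ∈ ℂ^{p2×q2} set p(X,Y) = A − BXD − CYE. Then the maximum of r(p(X,Y)) over all X ∈ ℂ^{p1×q1} and Y ∈ ℂ^{p2×q2} equals min{ r([A; D; E]), r([A B C]), r([A B; E 0]), r([A C; D 0]) }. -/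
set_option linter.unusedSectionVars false
set_option maxHeartbeats 1600000

open Matrix

section Helpers

open LinearMap Submodule Module

variable {m n p q : Type*} [Fintype m] [Fintype n] [Fintype p] [Fintype q]
variable [DecidableEq m] [DecidableEq n] [DecidableEq p] [DecidableEq q]

lemma range_fromColumns (A : Matrix m n ℂ) (B : Matrix m p ℂ) :
    LinearMap.range (fromCols A B).mulVecLin
      = LinearMap.range A.mulVecLin ⊔ LinearMap.range B.mulVecLin := by
  apply le_antisymm
  · rintro y ⟨v, rfl⟩
    rw [mulVecLin_apply, ← Sum.elim_comp_inl_inr v, fromCols_mulVec_sumElim]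
    exact add_mem (mem_sup_left ⟨_, rfl⟩) (mem_sup_right ⟨_, rfl⟩)
  · apply sup_le
    · rintro y ⟨v, rfl⟩
      refine ⟨Sum.elim v 0, ?_⟩
      rw [mulVecLin_apply, fromCols_mulVec_sumElim, mulVec_zero, add_zero, mulVecLin_apply]
    · rintro y ⟨v, rfl⟩
      refine ⟨Sum.elim 0 v, ?_⟩
      rw [mulVecLin_apply, fromCols_mulVec_sumElim, mulVec_zero, zero_add, mulVecLin_apply]

lemma ker_fromRows (A : Matrix m n ℂ) (D : Matrix q n ℂ) :
    LinearMap.ker (fromRows A D).mulVecLin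
      = LinearMap.ker A.mulVecLin ⊓ LinearMap.ker D.mulVecLin := by
  ext v
  simp only [mem_ker, mem_inf, mulVecLin_apply, fromRows_mulVec]
  constructor
  · intro h
    constructor
    · funext i; exact congrFun h (Sum.inl i)
    · funext i; exact congrFun h (Sum.inr i)
  · rintro ⟨h1, h2⟩
    funext i; cases i with
    | inl i => simp [h1]
    | inr i => simp [h2]

lemma rank_eq_of_ker_eq {A : Matrix m n ℂ} {B : Matrix q n ℂ}
    (h : LinearMap.ker A.mulVecLin = LinearMap.ker B.mulVecLin) :
    A.rank = B.rank := by
  have hA := A.mulVecLin.finrank_range_add_finrank_ker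
  have hB := B.mulVecLin.finrank_range_add_finrank_ker
  rw [h] at hA
  rw [Matrix.rank, Matrix.rank]
  omega

lemma rank_sub_le_fromColumns (A : Matrix m n ℂ) (B : Matrix m p ℂ) (D : Matrix q n ℂ)
    (X : Matrix p q ℂ) : (A - B * X * D).rank ≤ (fromCols A B).rank := by
  rw [Matrix.rank, Matrix.rank]
  apply Submodule.finrank_mono
  rw [range_fromColumns]
  rintro y ⟨v, rfl⟩
  rw [mulVecLin_apply, sub_mulVec]
  exact sub_mem (mem_sup_left ⟨v, rfl⟩)
    (mem_sup_right ⟨(X * D) *ᵥ v, by rw [mulVecLin_apply, mulVec_mulVec, Matrix.mul_assoc]⟩)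

lemma rank_sub_le_fromRows (A : Matrix m n ℂ) (B : Matrix m p ℂ) (D : Matrix q n ℂ)
    (X : Matrix p q ℂ) : (A - B * X * D).rank ≤ (fromRows A D).rank := by
  have h1 := (A - B * X * D).mulVecLin.finrank_range_add_finrank_ker
  have h2 := (fromRows A D).mulVecLin.finrank_range_add_finrank_ker
  have hk : LinearMap.ker (fromRows A D).mulVecLin ≤ LinearMap.ker (A - B * X * D).mulVecLin := by
    rw [ker_fromRows]
    rintro v ⟨hA, hD⟩
    simp only [SetLike.mem_coe, mem_ker, mulVecLin_apply] at hA hD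
    rw [mem_ker, mulVecLin_apply, sub_mulVec, hA, ← mulVec_mulVec, ← mulVec_mulVec, hD, mulVec_zero, mulVec_zero, sub_zero]
  have := Submodule.finrank_mono hk
  rw [Matrix.rank, Matrix.rank]
  omega

lemma exists_submodule_finrank_le {V : Type*} [AddCommGroup V] [Module ℂ V]
    [FiniteDimensional ℂ V] (U : Submodule ℂ V) (t : ℕ) (h : t ≤ finrank ℂ U) :
    ∃ W : Submodule ℂ V, W ≤ U ∧ finrank ℂ W = t := by
  classical
  let b := finBasis ℂ U
  set vv : Fin t → V := fun i => (b (Fin.castLE h i) : V) with hvv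
  have hli : LinearIndependent ℂ vv := by
    have h1 : LinearIndependent ℂ (fun i : Fin (finrank ℂ U) => (b i : V)) :=
      b.linearIndependent.map' U.subtype (ker_subtype U)
    exact h1.comp (Fin.castLE h) (Fin.castLE_injective h)
  refine ⟨span ℂ (Set.range vv), ?_, ?_⟩
  · rw [span_le]
    rintro x ⟨i, rfl⟩
    exact (b (Fin.castLE h i)).2
  · rw [finrank_span_eq_card hli, Fintype.card_fin]

lemma exists_disjoint_submodule {V : Type*} [AddCommGroup V] [Module ℂ V]
    [FiniteDimensional ℂ V] (P Q : Submodule ℂ V) (t : ℕ)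
    (h : t + finrank ℂ (P ⊓ Q : Submodule ℂ V) ≤ finrank ℂ P) :
    ∃ W : Submodule ℂ V, W ≤ P ∧ W ⊓ Q = ⊥ ∧ finrank ℂ W = t := by
  classical
  -- complement of P ⊓ Q inside P
  set R : Submodule ℂ P := (P ⊓ Q).comap P.subtype with hR
  obtain ⟨U₀, hU₀⟩ := R.exists_isCompl
  set U : Submodule ℂ V := U₀.map P.subtype with hU
  have hUP : U ≤ P := by
    rintro x ⟨y, _, rfl⟩; exact y.2
  have hUQ : ∀ x ∈ U, x ∈ Q → x = 0 := by
    rintro x ⟨y, hy, rfl⟩ hxQ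
    have : y ∈ R := by
      rw [hR, mem_comap]; exact ⟨y.2, hxQ⟩
    have : y ∈ R ⊓ U₀ := ⟨this, hy⟩
    rw [hU₀.inf_eq_bot, mem_bot] at this
    simp [this]
  have hRrank : finrank ℂ R = finrank ℂ (P ⊓ Q : Submodule ℂ V) :=
    (Submodule.comapSubtypeEquivOfLe inf_le_left).finrank_eq
  have hU₀rank : finrank ℂ U₀ + finrank ℂ R = finrank ℂ P := by
    have := Submodule.finrank_sup_add_finrank_inf_eq R U₀
    rw [hU₀.sup_eq_top, hU₀.inf_eq_bot, finrank_bot, finrank_top] at this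
    omega
  have hUrank : finrank ℂ U = finrank ℂ U₀ := by
    rw [hU]
    exact (Submodule.equivMapOfInjective _ (injective_subtype P) U₀).symm.finrank_eq
  have ht : t ≤ finrank ℂ U := by omega
  obtain ⟨W, hWU, hWt⟩ := exists_submodule_finrank_le U t ht
  refine ⟨W, hWU.trans hUP, ?_, hWt⟩
  rw [eq_bot_iff]
  rintro x ⟨hxW, hxQ⟩
  exact hUQ x (hWU hxW) hxQ

lemma exists_matrix_of_factor (B : Matrix m p ℂ) (D : Matrix q n ℂ)
    (g : (n → ℂ) →ₗ[ℂ] (m → ℂ)) (hr : LinearMap.range g ≤ LinearMap.range B.mulVecLin)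
    (hk : LinearMap.ker D.mulVecLin ≤ LinearMap.ker g) :
    ∃ X : Matrix p q ℂ, (B * X * D).mulVecLin = g := by
  classical
  set D' := D.mulVecLin
  set B' := B.mulVecLin
  -- step 1: h : (q → ℂ) →ₗ (m → ℂ) with h ∘ D' = g and range h ≤ range g
  obtain ⟨S, hS⟩ := (LinearMap.range D').exists_isCompl
  set π := (LinearMap.range D').linearProjOfIsCompl S hS
  set gbar := (LinearMap.ker D').liftQ g hk
  set e := D'.quotKerEquivRange
  set h : (q → ℂ) →ₗ[ℂ] (m → ℂ) := gbar ∘ₗ (e.symm : LinearMap.range D' →ₗ[ℂ] _) ∘ₗ π with hh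
  have hcomp : h ∘ₗ D' = g := by
    refine LinearMap.ext fun x => ?_
    have h1 : π (D' x) = ⟨D' x, LinearMap.mem_range_self D' x⟩ :=
      Submodule.linearProjOfIsCompl_apply_left hS ⟨D' x, LinearMap.mem_range_self D' x⟩
    simp only [hh, LinearMap.comp_apply, h1]
    have h2 : e.symm ⟨D' x, LinearMap.mem_range_self D' x⟩ = (LinearMap.ker D').mkQ x :=
      D'.quotKerEquivRange_symm_apply_image x (LinearMap.mem_range_self D' x)
    simp only [LinearEquiv.coe_coe]
    rw [h2]
    simp [gbar]
  have hrange : LinearMap.range h ≤ LinearMap.range B' := by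
    have h4 : LinearMap.range h ≤ LinearMap.range gbar := LinearMap.range_comp_le_range _ _
    have h5 : LinearMap.range gbar = LinearMap.range g := Submodule.range_liftQ _ g hk
    rw [h5] at h4
    exact h4.trans hr
  -- step 2: factor h through B'
  set h' : (q → ℂ) →ₗ[ℂ] LinearMap.range B' :=
    h.codRestrict (LinearMap.range B') (fun x => hrange (LinearMap.mem_range_self h x))
  obtain ⟨s, hs⟩ := B'.rangeRestrict.exists_rightInverse_of_surjective
    (LinearMap.range_rangeRestrict B')
  set k : (q → ℂ) →ₗ[ℂ] (p → ℂ) := s ∘ₗ h'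
  have hBk : B' ∘ₗ k = h := by
    refine LinearMap.ext fun x => ?_
    have h3 : B' (s (h' x)) = (h' x : m → ℂ) := by
      have := congrArg (Subtype.val) (LinearMap.congr_fun hs (h' x))
      simpa using this
    simp [k, LinearMap.comp_apply, h3, h']
  refine ⟨LinearMap.toMatrix' k, ?_⟩
  rw [Matrix.mulVecLin_mul, Matrix.mulVecLin_mul]
  have : (LinearMap.toMatrix' k).mulVecLin = k := by
    rw [← Matrix.toLin'_apply', Matrix.toLin'_toMatrix']
  rw [this]
  rw [← hcomp, ← hBk, LinearMap.comp_assoc]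

lemma mulVecLin_sub (M N : Matrix m n ℂ) :
    (M - N).mulVecLin = M.mulVecLin - N.mulVecLin := by
  refine LinearMap.ext fun v => ?_
  simp [mulVecLin_apply, sub_mulVec]

/-- The one-variable maximal rank theorem: attainment. -/
lemma exists_rank_sub_eq_min (A : Matrix m n ℂ) (B : Matrix m p ℂ) (D : Matrix q n ℂ) :
    ∃ X : Matrix p q ℂ,
      (A - B * X * D).rank = min (fromCols A B).rank (fromRows A D).rank := by
  classical
  set f := A.mulVecLin with hf
  set B' := B.mulVecLin with hB'
  set D' := D.mulVecLin with hD'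
  set Rf := LinearMap.range f with hRf
  set V' := LinearMap.range B' with hV'
  set K := LinearMap.ker D' with hK
  set rc := (fromCols A B).rank with hrc0
  set rr := (fromRows A D).rank with hrr0
  set r := A.rank with hr0
  have hrc : rc = finrank ℂ (Rf ⊔ V' : Submodule ℂ (m → ℂ)) := by
    rw [hrc0, Matrix.rank, range_fromColumns]
  have hr : r = finrank ℂ Rf := rfl
  -- rank-nullity facts
  have hNf : r + finrank ℂ (LinearMap.ker f : Submodule ℂ (n → ℂ)) = finrank ℂ (n → ℂ) := by
    rw [hr0, Matrix.rank]; exact f.finrank_range_add_finrank_ker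
  have hNr : rr + finrank ℂ ((LinearMap.ker f ⊓ K) : Submodule ℂ (n → ℂ)) = finrank ℂ (n → ℂ) := by
    rw [hrr0, Matrix.rank, ← ker_fromRows A D]
    exact (fromRows A D).mulVecLin.finrank_range_add_finrank_ker
  have hsup : finrank ℂ (Rf ⊔ V' : Submodule ℂ (m → ℂ))
      + finrank ℂ ((V' ⊓ Rf) : Submodule ℂ (m → ℂ)) = finrank ℂ Rf + finrank ℂ V' := by
    have := Submodule.finrank_sup_add_finrank_inf_eq Rf V'
    rw [inf_comm] at this
    exact this
  have hkermono : finrank ℂ ((LinearMap.ker f ⊓ K) : Submodule ℂ (n → ℂ))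
      ≤ finrank ℂ (LinearMap.ker f : Submodule ℂ (n → ℂ)) :=
    Submodule.finrank_mono inf_le_left
  have hrlerc : r ≤ rc := by
    rw [hrc, hr]; exact Submodule.finrank_mono le_sup_left
  have hrlerr : r ≤ rr := by omega
  set t := min rc rr - r with ht0
  have hmin1 : min rc rr ≤ rc := min_le_left _ _
  have hmin2 : min rc rr ≤ rr := min_le_right _ _
  have hminr : r ≤ min rc rr := le_min hrlerc hrlerr
  -- subspace U inside ker f
  obtain ⟨U, hUker, hUK, hUt⟩ := exists_disjoint_submodule (LinearMap.ker f) K t (by omega)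
  -- subspace W inside V'
  obtain ⟨W, hWV, hWRf, hWt⟩ := exists_disjoint_submodule V' Rf t (by omega)
  -- an isomorphism U ≃ W
  have hUW : finrank ℂ U = finrank ℂ W := by rw [hUt, hWt]
  obtain ⟨e⟩ := FiniteDimensional.nonempty_linearEquiv_of_finrank_eq hUW
  -- a complement S of U containing K
  obtain ⟨T, hT⟩ := (U ⊔ K).exists_isCompl
  set S := K ⊔ T with hS0
  have hUS : IsCompl U S := by
    constructor
    · rw [disjoint_def]
      intro x hxU hxS
      rw [hS0] at hxS
      obtain ⟨k, hk, t', ht', rfl⟩ := Submodule.mem_sup.mp hxS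
      have h1 : t' ∈ U ⊔ K := by
        have : (k + t') - k ∈ U ⊔ K :=
          sub_mem (le_sup_left (a := U) hxU) (Submodule.mem_sup_right hk)
        simpa using this
      have ht0' : t' = 0 := Submodule.disjoint_def.mp hT.disjoint t' h1 ht'
      subst ht0'
      rw [add_zero] at hxU ⊢
      have : k ∈ U ⊓ K := ⟨hxU, hk⟩
      rw [hUK] at this
      simpa using this
    · rw [codisjoint_iff, hS0, ← sup_assoc, sup_comm U K, sup_comm K U]
      rw [← codisjoint_iff]
      exact hT.codisjoint
  set π := U.linearProjOfIsCompl S hUS with hπ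
  set g : (n → ℂ) →ₗ[ℂ] (m → ℂ) := W.subtype ∘ₗ (e : U →ₗ[ℂ] W) ∘ₗ π with hg
  have hgW : ∀ x, g x ∈ W := fun x => (e (π x)).2
  have hgr : LinearMap.range g ≤ V' := by
    rintro y ⟨x, rfl⟩; exact hWV (hgW x)
  have hgk : K ≤ LinearMap.ker g := by
    intro x hx
    rw [mem_ker, hg]
    have h0 : π x = 0 := Submodule.linearProjOfIsCompl_apply_right' hUS (le_sup_left (a := K) hx)
    simp only [LinearMap.comp_apply, h0, _root_.map_zero, Submodule.coe_zero]
  obtain ⟨X, hX⟩ := exists_matrix_of_factor B D g hgr hgk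
  refine ⟨X, le_antisymm (le_min (rank_sub_le_fromColumns A B D X)
    (rank_sub_le_fromRows A B D X)) ?_⟩
  -- lower bound
  have hfg : (A - B * X * D).mulVecLin = f - g := by
    rw [mulVecLin_sub, hX, hf]
  have hWrange : W ≤ LinearMap.range (f - g) := by
    intro w hw
    set u : U := e.symm ⟨w, hw⟩ with hu
    have hπu : π (u : n → ℂ) = u := Submodule.linearProjOfIsCompl_apply_left hUS u
    have hfu : f (u : n → ℂ) = 0 := by
      have : (u : n → ℂ) ∈ LinearMap.ker f := hUker u.2
      rwa [mem_ker] at this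
    have hgu : g (u : n → ℂ) = w := by
      rw [hg]
      simp only [LinearMap.comp_apply, hπu]
      rw [hu]
      simp
    refine ⟨-(u : n → ℂ), ?_⟩
    rw [map_neg, LinearMap.sub_apply, hfu, hgu, zero_sub, neg_neg]
  have hRfrange : Rf ≤ LinearMap.range (f - g) := by
    rintro y ⟨x, rfl⟩
    have h1 : (f - g) x ∈ LinearMap.range (f - g) := LinearMap.mem_range_self _ x
    have h2 : g x ∈ LinearMap.range (f - g) := hWrange (hgW x)
    have : f x = (f - g) x + g x := by simp
    rw [this]
    exact add_mem h1 h2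
  have hsupW : finrank ℂ ((Rf ⊔ W) : Submodule ℂ (m → ℂ)) = r + t := by
    have h1 := Submodule.finrank_sup_add_finrank_inf_eq Rf W
    have h2 : Rf ⊓ W = ⊥ := by rw [inf_comm]; exact hWRf
    rw [h2, finrank_bot, add_zero] at h1
    rw [h1, hWt, hr]
  have hle : finrank ℂ ((Rf ⊔ W) : Submodule ℂ (m → ℂ))
      ≤ finrank ℂ (LinearMap.range (f - g) : Submodule ℂ (m → ℂ)) :=
    Submodule.finrank_mono (sup_le hRfrange hWrange)
  have : min rc rr = r + t := by omega
  rw [this, Matrix.rank, hfg]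
  omega

lemma rank_ge_of_isUnit {k : ℕ} (N : Matrix m n ℂ) (u : Matrix (Fin k) m ℂ)
    (v : Matrix n (Fin k) ℂ) (h : IsUnit (u * N * v)) : k ≤ N.rank := by
  have h1 : (u * N * v).rank = k := by rw [Matrix.rank_of_isUnit _ h, Fintype.card_fin]
  calc k = (u * N * v).rank := h1.symm
    _ ≤ (N * v).rank := by rw [Matrix.mul_assoc]; exact Matrix.rank_mul_le_right _ _
    _ ≤ N.rank := Matrix.rank_mul_le_left _ _

lemma exists_compression_isUnit (N : Matrix m n ℂ) :
    ∃ (u : Matrix (Fin N.rank) m ℂ) (v : Matrix n (Fin N.rank) ℂ), IsUnit (u * N * v) := by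
  classical
  have hfr : finrank ℂ (LinearMap.range N.mulVecLin) = N.rank := rfl
  let b : Basis (Fin N.rank) ℂ (LinearMap.range N.mulVecLin) :=
    Module.finBasisOfFinrankEq ℂ _ hfr
  have hb : ∀ i, ∃ x : n → ℂ, N.mulVecLin x = (b i : m → ℂ) := fun i => (b i).2
  choose x hx using hb
  set v : Matrix n (Fin N.rank) ℂ := Matrix.of fun j i => x i j with hv
  have hvc : ∀ c : Fin N.rank → ℂ, v *ᵥ c = ∑ i, c i • x i := by
    intro c
    funext j
    simp only [Matrix.mulVec, dotProduct, Finset.sum_apply, Pi.smul_apply, smul_eq_mul, hv,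
      Matrix.of_apply]
    exact Finset.sum_congr rfl fun i _ => mul_comm _ _
  have hNv : ∀ c : Fin N.rank → ℂ, (N * v).mulVecLin c = ∑ i, c i • (b i : m → ℂ) := by
    intro c
    rw [mulVecLin_apply, ← Matrix.mulVec_mulVec, hvc]
    rw [show N *ᵥ (∑ i, c i • x i) = N.mulVecLin (∑ i, c i • x i) from rfl]
    rw [map_sum]
    congr 1
    funext i
    rw [_root_.map_smul, hx]
  have hker : LinearMap.ker (N * v).mulVecLin = ⊥ := by
    rw [eq_bot_iff]
    intro c hc
    rw [mem_ker, hNv] at hc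
    have hli : LinearIndependent ℂ ((LinearMap.range N.mulVecLin).subtype ∘ b) :=
      b.linearIndependent.map' (LinearMap.range N.mulVecLin).subtype
        (ker_subtype (LinearMap.range N.mulVecLin))
    have h2 : ∑ i, c i • ((LinearMap.range N.mulVecLin).subtype ∘ b) i = 0 := hc
    have := Fintype.linearIndependent_iff.mp hli c h2
    exact funext this
  obtain ⟨l, hl⟩ := (N * v).mulVecLin.exists_leftInverse_of_injective hker
  refine ⟨LinearMap.toMatrix' l, v, ?_⟩
  have : LinearMap.toMatrix' l * N * v = 1 := by
    rw [Matrix.mul_assoc]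
    apply Matrix.toLin'.injective
    rw [Matrix.toLin'_apply', Matrix.toLin'_apply', mulVecLin_mul, mulVecLin_one]
    rw [← Matrix.toLin'_apply', Matrix.toLin'_toMatrix']
    exact hl
  rw [this]
  exact isUnit_one

lemma map_C_map_eval {a b : Type*} (Y : Matrix p q ℂ) (M : Matrix a b ℂ) :
    (M.map MvPolynomial.C).map (MvPolynomial.eval (fun s : p × q => Y s.1 s.2)) = M := by
  rw [Matrix.map_map]
  convert Matrix.map_id M
  funext z
  simp

lemma eval_affine_det {k : ℕ} {m1 n1 : Type*} [Fintype m1] [Fintype n1] [DecidableEq m1]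
    (M1 : Matrix m1 n1 ℂ) (C1 : Matrix m1 p ℂ) (E1 : Matrix q n1 ℂ)
    (u : Matrix (Fin k) m1 ℂ) (v : Matrix n1 (Fin k) ℂ) (Y : Matrix p q ℂ) :
    MvPolynomial.eval (fun s : p × q => Y s.1 s.2)
      ((u.map ((MvPolynomial.C (σ := p × q))) *
         ((M1.map (MvPolynomial.C (σ := p × q))) - (C1.map (MvPolynomial.C (σ := p × q))) *
            (Matrix.of fun i j => (MvPolynomial.X (i, j) : MvPolynomial (p × q) ℂ)) *
            (E1.map (MvPolynomial.C (σ := p × q)))) * (v.map (MvPolynomial.C (σ := p × q)))).det)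
    = (u * (M1 - C1 * Y * E1) * v).det := by
  classical
  set ev := (MvPolynomial.eval (fun s : p × q => Y s.1 s.2) : MvPolynomial (p × q) ℂ →+* ℂ) with hev
  rw [RingHom.map_det]
  rw [RingHom.mapMatrix_apply]
  congr 1
  have hYg : (Matrix.of fun i j => (MvPolynomial.X (i, j) : MvPolynomial (p × q) ℂ)).map ev
      = Y := by
    funext i j
    simp [ev, Matrix.map]
  rw [Matrix.map_mul (f := ev), Matrix.map_mul (f := ev),
    Matrix.map_sub (⇑ev) (fun x y => map_sub ev x y), Matrix.map_mul (f := ev),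
      Matrix.map_mul (f := ev), hYg, hev]
  rw [map_C_map_eval, map_C_map_eval, map_C_map_eval, map_C_map_eval, map_C_map_eval]

lemma exists_common_max {m1 n1 m2 n2 : Type*} [Fintype m1] [Fintype n1] [Fintype m2] [Fintype n2]
    [DecidableEq n1] [DecidableEq n2] [DecidableEq m1] [DecidableEq m2]
    (M1 : Matrix m1 n1 ℂ) (C1 : Matrix m1 p ℂ) (E1 : Matrix q n1 ℂ)
    (M2 : Matrix m2 n2 ℂ) (C2 : Matrix m2 p ℂ) (E2 : Matrix q n2 ℂ) (F G : ℕ)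
    (h1 : ∀ Y : Matrix p q ℂ, (M1 - C1 * Y * E1).rank ≤ F)
    (h2 : ∀ Y : Matrix p q ℂ, (M2 - C2 * Y * E2).rank ≤ G)
    (e1 : ∃ Y : Matrix p q ℂ, (M1 - C1 * Y * E1).rank = F)
    (e2 : ∃ Y : Matrix p q ℂ, (M2 - C2 * Y * E2).rank = G) :
    ∃ Y : Matrix p q ℂ, (M1 - C1 * Y * E1).rank = F ∧ (M2 - C2 * Y * E2).rank = G := by
  classical
  obtain ⟨Y1, hY1⟩ := e1
  obtain ⟨Y2, hY2⟩ := e2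
  obtain ⟨u1, v1, hu1⟩ := exists_compression_isUnit (M1 - C1 * Y1 * E1)
  obtain ⟨u2, v2, hu2⟩ := exists_compression_isUnit (M2 - C2 * Y2 * E2)
  set Yg : Matrix p q (MvPolynomial (p × q) ℂ) :=
    Matrix.of fun i j => (MvPolynomial.X (i, j) : MvPolynomial (p × q) ℂ) with hYg
  set Φ : MvPolynomial (p × q) ℂ :=
    (u1.map ((MvPolynomial.C (σ := p × q))) *
      ((M1.map (MvPolynomial.C (σ := p × q))) - (C1.map (MvPolynomial.C (σ := p × q))) * Yg * (E1.map (MvPolynomial.C (σ := p × q)))) *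
      (v1.map (MvPolynomial.C (σ := p × q)))).det with hΦ
  set Ψ : MvPolynomial (p × q) ℂ :=
    (u2.map ((MvPolynomial.C (σ := p × q))) *
      ((M2.map (MvPolynomial.C (σ := p × q))) - (C2.map (MvPolynomial.C (σ := p × q))) * Yg * (E2.map (MvPolynomial.C (σ := p × q)))) *
      (v2.map (MvPolynomial.C (σ := p × q)))).det with hΨ
  have hΦeval : ∀ Y : Matrix p q ℂ,
      MvPolynomial.eval (fun s : p × q => Y s.1 s.2) Φ = (u1 * (M1 - C1 * Y * E1) * v1).det :=
    fun Y => eval_affine_det M1 C1 E1 u1 v1 Y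
  have hΨeval : ∀ Y : Matrix p q ℂ,
      MvPolynomial.eval (fun s : p × q => Y s.1 s.2) Ψ = (u2 * (M2 - C2 * Y * E2) * v2).det :=
    fun Y => eval_affine_det M2 C2 E2 u2 v2 Y
  have hΦ1 : MvPolynomial.eval (fun s : p × q => Y1 s.1 s.2) Φ ≠ 0 := by
    rw [hΦeval]
    exact (Matrix.isUnit_iff_isUnit_det _ |>.mp hu1).ne_zero
  have hΨ2 : MvPolynomial.eval (fun s : p × q => Y2 s.1 s.2) Ψ ≠ 0 := by
    rw [hΨeval]
    exact (Matrix.isUnit_iff_isUnit_det _ |>.mp hu2).ne_zero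
  have hΦ0 : Φ ≠ 0 := fun h0 => hΦ1 (by rw [h0, map_zero])
  have hΨ0 : Ψ ≠ 0 := fun h0 => hΨ2 (by rw [h0, map_zero])
  have hprod : Φ * Ψ ≠ 0 := mul_ne_zero hΦ0 hΨ0
  have hex : ∃ z : (p × q) → ℂ, MvPolynomial.eval z (Φ * Ψ) ≠ 0 := by
    by_contra hcon
    push_neg at hcon
    exact hprod (MvPolynomial.funext fun z => by rw [hcon z, map_zero])
  obtain ⟨z, hz⟩ := hex
  set Y0 : Matrix p q ℂ := Matrix.of fun i j => z (i, j) with hY0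
  have hzY0 : (fun s : p × q => Y0 s.1 s.2) = z := by
    funext s
    simp [hY0]
  rw [_root_.map_mul] at hz
  have hΦz : MvPolynomial.eval z Φ ≠ 0 := fun h0 => hz (by rw [h0, zero_mul])
  have hΨz : MvPolynomial.eval z Ψ ≠ 0 := fun h0 => hz (by rw [h0, mul_zero])
  rw [← hzY0] at hΦz hΨz
  rw [hΦeval] at hΦz
  rw [hΨeval] at hΨz
  have hr1 : (M1 - C1 * Y1 * E1).rank ≤ (M1 - C1 * Y0 * E1).rank := by
    apply rank_ge_of_isUnit _ u1 v1
    rw [Matrix.isUnit_iff_isUnit_det]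
    exact isUnit_iff_ne_zero.mpr hΦz
  have hr2 : (M2 - C2 * Y2 * E2).rank ≤ (M2 - C2 * Y0 * E2).rank := by
    apply rank_ge_of_isUnit _ u2 v2
    rw [Matrix.isUnit_iff_isUnit_det]
    exact isUnit_iff_ne_zero.mpr hΨz
  exact ⟨Y0, le_antisymm (h1 Y0) (by omega), le_antisymm (h2 Y0) (by omega)⟩

end Helpers

section Assembly

open LinearMap Submodule Module

variable {m n p q l : Type*} [Fintype m] [Fintype n] [Fintype p] [Fintype q] [Fintype l]
variable [DecidableEq m] [DecidableEq n] [DecidableEq p] [DecidableEq q] [DecidableEq l]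

lemma fromColumns_sub (A1 A2 : Matrix m n ℂ) (B1 B2 : Matrix m p ℂ) :
    fromCols A1 B1 - fromCols A2 B2 = fromCols (A1 - A2) (B1 - B2) := by
  funext i j
  cases j <;> simp [fromCols]

lemma fromRows_sub (A1 A2 : Matrix m n ℂ) (D1 D2 : Matrix q n ℂ) :
    fromRows A1 D1 - fromRows A2 D2 = fromRows (A1 - A2) (D1 - D2) := by
  funext i j
  cases i <;> rfl

lemma rank_fromColumns_assoc (A : Matrix m n ℂ) (B : Matrix m p ℂ) (C : Matrix m q ℂ) :
    (fromCols (fromCols A B) C).rank = (fromCols A (fromCols B C)).rank := by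
  rw [Matrix.rank, Matrix.rank, range_fromColumns, range_fromColumns, range_fromColumns,
    range_fromColumns, sup_assoc]

lemma rank_fromRows_assoc (A : Matrix m n ℂ) (D : Matrix q n ℂ) (E : Matrix l n ℂ) :
    (fromRows (fromRows A D) E).rank = (fromRows A (fromRows D E)).rank := by
  apply rank_eq_of_ker_eq
  rw [ker_fromRows, ker_fromRows, ker_fromRows, ker_fromRows, inf_assoc]

end Assembly

/-- The maximal rank of `A - B*X*D - C*Y*E` over all `X`, `Y`. -/
theorem max_rank_p (m n p1 p2 q1 q2 : ℕ)
    (A : Matrix (Fin m) (Fin n) ℂ) (B : Matrix (Fin m) (Fin p1) ℂ)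
    (C : Matrix (Fin m) (Fin p2) ℂ) (D : Matrix (Fin q1) (Fin n) ℂ)
    (E : Matrix (Fin q2) (Fin n) ℂ) :
    IsGreatest {r : ℕ | ∃ (X : Matrix (Fin p1) (Fin q1) ℂ) (Y : Matrix (Fin p2) (Fin q2) ℂ),
        r = (A - B * X * D - C * Y * E).rank}
      (min (min (fromRows A (fromRows D E)).rank
                (fromCols A (fromCols B C)).rank)
           (min (fromBlocks A B E 0).rank
                (fromBlocks A C D 0).rank)) := by
  classical
  -- abbreviations for the four corner ranks (in the nested `fromCols/fromRows` form)
  set r1 := (fromCols (fromCols A B) C).rank with hr1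
  set r2 := (fromRows (fromCols A B) (fromCols E 0)).rank with hr2
  set r3 := (fromCols (fromRows A D) (fromRows C 0)).rank with hr3
  set r4 := (fromRows (fromRows A D) E).rank with hr4
  -- identify them with the four matrices in the statement
  have hg1 : r1 = (fromCols A (fromCols B C)).rank := rank_fromColumns_assoc A B C
  have hg2 : r2 = (fromBlocks A B E 0).rank := by
    rw [hr2, fromRows_fromCols_eq_fromBlocks]
  have hg3 : r3 = (fromBlocks A C D 0).rank := by
    rw [hr3, fromCols_fromRows_eq_fromBlocks]
  have hg4 : r4 = (fromRows A (fromRows D E)).rank := rank_fromRows_assoc A D E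
  -- the two affine families in Y
  have hcol : ∀ Y : Matrix (Fin p2) (Fin q2) ℂ,
      fromCols A B - C * Y * fromCols E (0 : Matrix (Fin q2) (Fin p1) ℂ)
        = fromCols (A - C * Y * E) B := by
    intro Y
    rw [Matrix.mul_fromCols, Matrix.mul_zero, fromColumns_sub, sub_zero]
  have hrow : ∀ Y : Matrix (Fin p2) (Fin q2) ℂ,
      fromRows A D - fromRows C (0 : Matrix (Fin q1) (Fin p2) ℂ) * Y * E
        = fromRows (A - C * Y * E) D := by
    intro Y
    rw [Matrix.fromRows_mul, Matrix.fromRows_mul, Matrix.zero_mul, Matrix.zero_mul,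
      fromRows_sub, sub_zero]
  -- bounds for the two families
  have h1 : ∀ Y : Matrix (Fin p2) (Fin q2) ℂ,
      (fromCols A B - C * Y * fromCols E (0 : Matrix (Fin q2) (Fin p1) ℂ)).rank
        ≤ min r1 r2 :=
    fun Y => le_min (rank_sub_le_fromColumns _ _ _ Y) (rank_sub_le_fromRows _ _ _ Y)
  have h2 : ∀ Y : Matrix (Fin p2) (Fin q2) ℂ,
      (fromRows A D - fromRows C (0 : Matrix (Fin q1) (Fin p2) ℂ) * Y * E).rank
        ≤ min r3 r4 := by
    intro Y
    refine le_min ?_ ?_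
    · exact rank_sub_le_fromColumns _ _ _ Y
    · exact rank_sub_le_fromRows _ _ _ Y
  -- attainment for each family separately
  obtain ⟨Ya, hYa⟩ := exists_rank_sub_eq_min (fromCols A B) C
    (fromCols E (0 : Matrix (Fin q2) (Fin p1) ℂ))
  obtain ⟨Yb, hYb⟩ := exists_rank_sub_eq_min (fromRows A D)
    (fromRows C (0 : Matrix (Fin q1) (Fin p2) ℂ)) E
  -- simultaneous attainment
  obtain ⟨Y0, hY01, hY02⟩ := exists_common_max (fromCols A B) C
    (fromCols E (0 : Matrix (Fin q2) (Fin p1) ℂ)) (fromRows A D)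
    (fromRows C (0 : Matrix (Fin q1) (Fin p2) ℂ)) E (min r1 r2) (min r3 r4)
    h1 h2 ⟨Ya, hYa⟩ ⟨Yb, hYb⟩
  rw [hcol Y0] at hY01
  rw [hrow Y0] at hY02
  -- now choose X for the matrix A - C * Y0 * E
  obtain ⟨X0, hX0⟩ := exists_rank_sub_eq_min (A - C * Y0 * E) B D
  rw [hY01, hY02] at hX0
  constructor
  · refine ⟨X0, Y0, ?_⟩
    rw [show A - B * X0 * D - C * Y0 * E = A - C * Y0 * E - B * X0 * D from sub_right_comm _ _ _,
      hX0, hg1, hg2, hg3, hg4]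
    omega
  · rintro r ⟨X, Y, rfl⟩
    have hsw : A - B * X * D - C * Y * E = A - C * Y * E - B * X * D := sub_right_comm _ _ _
    have b1 : (A - B * X * D - C * Y * E).rank ≤ (fromCols (A - C * Y * E) B).rank := by
      rw [hsw]; exact rank_sub_le_fromColumns _ _ _ X
    have b2 : (A - B * X * D - C * Y * E).rank ≤ (fromRows (A - C * Y * E) D).rank := by
      rw [hsw]; exact rank_sub_le_fromRows _ _ _ X
    rw [← hcol Y] at b1
    rw [← hrow Y] at b2
    have b3 := (h1 Y).trans' b1
    have b4 := (h2 Y).trans' b2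
    rw [hg1, hg2] at b3
    rw [hg3, hg4] at b4
    omega
end

section
/- Let A ∈ ℂ^{m×n}, B ∈ ℂ^{m×k}, C ∈ ℂ^{l×n} be given, and for X ∈ ℂ^{k×n} and Y ∈ ℂ^{m×l} set f1(X,Y) = A − BX − YC. Then the maximum of r(f1(X,Y)) over all X ∈ ℂ^{k×n} and Y ∈ ℂ^{m×l} equals min{ m, n, r([A B; C 0]) }. -/
open Matrix Module Submodule

/-- Abstract core: given linear maps `g : ℂⁿ → W` and `f : ℂᵏ → W`, there is `h : ℂⁿ → ℂᵏ`
with `rank (g + f ∘ h) = min n (dim (range g ⊔ range f))`. -/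
private lemma core_abstract {W : Type*} [AddCommGroup W] [Module ℂ W] [FiniteDimensional ℂ W]
    (n k : ℕ) (g : (Fin n → ℂ) →ₗ[ℂ] W) (f : (Fin k → ℂ) →ₗ[ℂ] W) :
    ∃ h : (Fin n → ℂ) →ₗ[ℂ] (Fin k → ℂ),
      finrank ℂ (LinearMap.range (g + f ∘ₗ h)) =
        min n (finrank ℂ ↥(LinearMap.range g ⊔ LinearMap.range f)) := by
  set V := LinearMap.range g with hV
  set F := LinearMap.range f with hF
  set K := LinearMap.ker g with hK
  set r := finrank ℂ V with hr
  set s := finrank ℂ ↥(V ⊔ F) with hs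
  have hrk : finrank ℂ ↥V + finrank ℂ ↥K = n := by
    have := LinearMap.finrank_range_add_finrank_ker g
    rw [Module.finrank_fin_fun] at this
    rw [hV, hK]; exact this
  have hrn : r ≤ n := by omega
  have hrs : r ≤ s := Submodule.finrank_mono (le_sup_left : V ≤ V ⊔ F)
  set t := min n s - r with ht
  have hKdim : finrank ℂ K = n - r := by omega
  -- a complement `F'` of `F ⊓ V` inside `F`
  obtain ⟨U, hU⟩ := Submodule.exists_isCompl (F ⊓ V)
  set F' := U ⊓ F with hF'
  have hdisjFV : F' ⊓ V = ⊥ := by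
    rw [eq_bot_iff]
    intro x hx
    exact hU.disjoint.le_bot ⟨⟨hx.1.2, hx.2⟩, hx.1.1⟩
  have hsupF : (F ⊓ V) ⊔ F' = F := by
    rw [hF', ← sup_inf_assoc_of_le U (inf_le_left : F ⊓ V ≤ F), hU.sup_eq_top, top_inf_eq]
  have hinfbot : (F ⊓ V) ⊓ F' = ⊥ := by
    rw [eq_bot_iff]; intro x hx
    exact hU.disjoint.le_bot ⟨hx.1, hx.2.1⟩
  have hF'dim : finrank ℂ F' = s - r := by
    have e1 := Submodule.finrank_sup_add_finrank_inf_eq (F ⊓ V) F'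
    rw [hsupF, hinfbot, finrank_bot] at e1
    have e2 := Submodule.finrank_sup_add_finrank_inf_eq V F
    have e3 : finrank ℂ ↥((V : Submodule ℂ W) ⊓ F) = finrank ℂ ↥((F : Submodule ℂ W) ⊓ V) := by
      rw [inf_comm]
    omega
  have ht2 : t ≤ finrank ℂ F' := by rw [hF'dim]; omega
  have ht1 : t ≤ finrank ℂ K := by rw [hKdim]; omega
  let bK : Basis (Fin (finrank ℂ K)) ℂ K := finBasis ℂ K
  let bF : Basis (Fin (finrank ℂ F')) ℂ F' := finBasis ℂ F'
  set w : Fin t → W := fun i => (bF (Fin.castLE ht2 i) : W) with hw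
  have hwF' : ∀ i, w i ∈ F' := fun i => (bF (Fin.castLE ht2 i)).2
  have hex : ∀ i : Fin t, ∃ x, f x = w i := fun i => (hwF' i).2
  choose u hu using hex
  set v : Fin (finrank ℂ K) → (Fin k → ℂ) :=
    fun i => if h : (i : ℕ) < t then u ⟨i, h⟩ else 0 with hv
  let e : K →ₗ[ℂ] (Fin k → ℂ) := bK.constr ℂ v
  obtain ⟨K', hKc⟩ := Submodule.exists_isCompl K
  let π : (Fin n → ℂ) →ₗ[ℂ] K := K.linearProjOfIsCompl K' hKc
  refine ⟨e ∘ₗ π, ?_⟩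
  set G := g + f ∘ₗ (e ∘ₗ π) with hG
  have hπright : ∀ x ∈ K', π x = 0 := by
    intro x hx
    exact Submodule.linearProjOfIsCompl_apply_right hKc ⟨x, hx⟩
  have hGK' : ∀ x ∈ K', G x = g x := by
    intro x hx
    simp [hG, hπright x hx]
  have hmapK' : Submodule.map G K' = V := by
    apply le_antisymm
    · rintro x ⟨y, hy, rfl⟩
      rw [hGK' y hy]
      exact ⟨y, rfl⟩
    · rintro x ⟨y, rfl⟩
      have hy : y ∈ K ⊔ K' := by rw [hKc.sup_eq_top]; trivial
      obtain ⟨a, ha, b, hb, rfl⟩ := Submodule.mem_sup.mp hy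
      refine ⟨b, hb, ?_⟩
      rw [hGK' b hb, map_add, show g a = 0 from ha, zero_add]
  have hcomp : G ∘ₗ K.subtype = f ∘ₗ e := by
    ext x
    have hπx : π (x : Fin n → ℂ) = x := Submodule.linearProjOfIsCompl_apply_left hKc x
    have hgx : g (x : Fin n → ℂ) = 0 := x.2
    simp [hG, hπx, hgx]
  have hmapK : Submodule.map G K = span ℂ (Set.range w) := by
    calc Submodule.map G K = LinearMap.range (G ∘ₗ K.subtype) := by
          rw [LinearMap.range_comp, Submodule.range_subtype]
      _ = LinearMap.range (f ∘ₗ e) := by rw [hcomp]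
      _ = Submodule.map f (LinearMap.range e) := by rw [LinearMap.range_comp]
      _ = Submodule.map f (span ℂ (Set.range v)) := by rw [Basis.constr_range]
      _ = span ℂ (f '' Set.range v) := by rw [Submodule.map_span]
      _ = span ℂ (Set.range w) := by
          apply le_antisymm
          · rw [span_le]
            rintro _ ⟨_, ⟨i, rfl⟩, rfl⟩
            by_cases hit : (i : ℕ) < t
            · have : f (v i) = w ⟨i, hit⟩ := by rw [hv]; simp [hit, hu]
              rw [this]
              exact subset_span ⟨⟨i, hit⟩, rfl⟩
            · have : f (v i) = 0 := by rw [hv]; simp [hit]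
              rw [this]
              exact Submodule.zero_mem _
          · rw [span_le]
            rintro _ ⟨i, rfl⟩
            have hlt : ((Fin.castLE ht1 i : Fin (finrank ℂ K)) : ℕ) < t := i.2
            have : w i = f (v (Fin.castLE ht1 i)) := by
              rw [hv]; simp only [hlt, dif_pos]
              rw [hu]
              congr 1
            rw [this]
            exact subset_span ⟨_, ⟨_, rfl⟩, rfl⟩
  have hrange : LinearMap.range G = span ℂ (Set.range w) ⊔ V := by
    rw [LinearMap.range_eq_map, ← hKc.sup_eq_top, Submodule.map_sup, hmapK, hmapK']
  have hspan_le : span ℂ (Set.range w) ≤ F' :=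
    span_le.mpr (Set.range_subset_iff.mpr hwF')
  have hdisj : span ℂ (Set.range w) ⊓ V = ⊥ := by
    rw [eq_bot_iff, ← hdisjFV]
    exact inf_le_inf_right _ hspan_le
  have hwli : LinearIndependent ℂ w := by
    have h1 : LinearIndependent ℂ (fun i : Fin t => bF (Fin.castLE ht2 i)) :=
      bF.linearIndependent.comp _ (Fin.castLE_injective ht2)
    exact h1.map' F'.subtype (Submodule.ker_subtype F')
  have hspan_dim : finrank ℂ (span ℂ (Set.range w)) = t := by
    rw [finrank_span_eq_card hwli, Fintype.card_fin]
  have hfinal := Submodule.finrank_sup_add_finrank_inf_eq (span ℂ (Set.range w)) V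
  rw [hdisj, finrank_bot, hspan_dim] at hfinal
  show finrank ℂ ↥(LinearMap.range G) = min n s
  rw [hrange]
  omega

/-- Matrix core lemma: exists `X` with `rank (N + B X) = min n (rank [N B])`. -/
private lemma core_matrix {ι : Type*} [Fintype ι] (n k : ℕ)
    (N : Matrix ι (Fin n) ℂ) (B : Matrix ι (Fin k) ℂ) :
    ∃ X : Matrix (Fin k) (Fin n) ℂ,
      (N + B * X).rank = min n (fromCols N B).rank := by
  obtain ⟨h, hh⟩ := core_abstract n k N.mulVecLin B.mulVecLin
  refine ⟨LinearMap.toMatrix' h, ?_⟩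
  have hX : (LinearMap.toMatrix' h).mulVecLin = h := Matrix.toLin'_toMatrix' h
  have h2 : LinearMap.range (fromCols N B).mulVecLin
      = LinearMap.range N.mulVecLin ⊔ LinearMap.range B.mulVecLin := by
    apply le_antisymm
    · rintro x ⟨y, rfl⟩
      have hy : y = Sum.elim (y ∘ Sum.inl) (y ∘ Sum.inr) := (Sum.elim_comp_inl_inr y).symm
      rw [Matrix.mulVecLin_apply, hy, fromCols_mulVec_sumElim]
      exact Submodule.add_mem_sup ⟨_, rfl⟩ ⟨_, rfl⟩
    · rw [sup_le_iff]
      constructor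
      · rintro x ⟨y, rfl⟩
        exact ⟨Sum.elim y 0, by
          rw [Matrix.mulVecLin_apply, fromCols_mulVec_sumElim]; simp⟩
      · rintro x ⟨y, rfl⟩
        exact ⟨Sum.elim 0 y, by
          rw [Matrix.mulVecLin_apply, fromCols_mulVec_sumElim]; simp⟩
  rw [Matrix.rank, Matrix.rank, mulVecLin_add, mulVecLin_mul, hX, h2]
  exact hh

/-- Maximal rank of `A - B*X - Y*C` over all `X`, `Y`. -/
theorem max_rank_f1 (m n k l : ℕ)
    (A : Matrix (Fin m) (Fin n) ℂ) (B : Matrix (Fin m) (Fin k) ℂ)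
    (C : Matrix (Fin l) (Fin n) ℂ) :
    IsGreatest {r : ℕ | ∃ (X : Matrix (Fin k) (Fin n) ℂ) (Y : Matrix (Fin m) (Fin l) ℂ),
        r = (A - B * X - Y * C).rank}
      (min (min m n) (fromBlocks A B C 0).rank) := by
  constructor
  · -- membership: the max is attained
    obtain ⟨X₀, hX₀⟩ := core_matrix n k (fromRows A C) (fromRows B (0 : Matrix (Fin l) (Fin k) ℂ))
    rw [fromCols_fromRows_eq_fromBlocks] at hX₀
    have hrows : fromRows A C + fromRows B (0 : Matrix (Fin l) (Fin k) ℂ) * X₀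
        = fromRows (A + B * X₀) C := by
      rw [fromRows_mul, Matrix.zero_mul]
      ext (i | i) j <;> simp
    rw [hrows] at hX₀
    set M := A + B * X₀ with hM
    obtain ⟨Y₀, hY₀⟩ := core_matrix m l Mᵀ Cᵀ
    refine ⟨-X₀, -Y₀ᵀ, ?_⟩
    have hmat : A - B * (-X₀) - (-Y₀ᵀ) * C = M + Y₀ᵀ * C := by
      rw [hM]
      simp [Matrix.mul_neg, Matrix.neg_mul, sub_neg_eq_add]
    rw [hmat]
    have htr : (M + Y₀ᵀ * C).rank = (Mᵀ + Cᵀ * Y₀).rank := by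
      rw [← Matrix.rank_transpose (Mᵀ + Cᵀ * Y₀), Matrix.transpose_add,
        Matrix.transpose_mul, Matrix.transpose_transpose, Matrix.transpose_transpose]
    rw [htr, hY₀, ← Matrix.transpose_fromRows, Matrix.rank_transpose, hX₀]
    omega
  · -- upper bound
    rintro r ⟨X, Y, rfl⟩
    refine le_min (le_min (Matrix.rank_le_height _) (Matrix.rank_le_width _)) ?_
    have key : A - B * X - Y * C =
        fromCols (1 : Matrix (Fin m) (Fin m) ℂ) (-Y) *
          (fromBlocks A B C 0 * fromRows (1 : Matrix (Fin n) (Fin n) ℂ) (-X)) := by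
      rw [fromBlocks_mul_fromRows, fromCols_mul_fromRows]
      simp [Matrix.mul_neg, Matrix.neg_mul, sub_eq_add_neg]
    calc (A - B * X - Y * C).rank
        ≤ (fromBlocks A B C 0 * fromRows (1 : Matrix (Fin n) (Fin n) ℂ) (-X)).rank := by
          rw [key]; exact Matrix.rank_mul_le_right _ _
      _ ≤ (fromBlocks A B C 0).rank := Matrix.rank_mul_le_left _ _
end

section
/- Let A ∈ ℂ^{m×n}, B ∈ ℂ^{m×k}, C ∈ ℂ^{l×n} be given, and for X ∈ ℂ^{k×n} and Y ∈ ℂ^{m×l} set f1(X,Y) = A − BX − YC. Then the minimum of r(f1(X,Y)) over all X ∈ ℂ^{k×n} and Y ∈ ℂ^{m×l} equals r([A B; C 0]) − r(B) − r(C). -/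
open Matrix

namespace MinRankF1

open LinearMap Submodule Module

variable {m n k l : ℕ}

/-- finrank of a product of submodules. -/
lemma finrank_prod_submodule {K M N : Type*} [Field K] [AddCommGroup M] [Module K M]
    [AddCommGroup N] [Module K N] [FiniteDimensional K M] [FiniteDimensional K N]
    (p : Submodule K M) (q : Submodule K N) :
    finrank K (p.prod q) = finrank K p + finrank K q := by
  have e : (p.prod q) ≃ₗ[K] p × q :=
    { toFun := fun x => (⟨x.1.1, x.2.1⟩, ⟨x.1.2, x.2.2⟩)
      invFun := fun y => ⟨(y.1.1, y.2.1), ⟨y.1.2, y.2.2⟩⟩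
      left_inv := fun x => rfl
      right_inv := fun y => rfl
      map_add' := fun x y => rfl
      map_smul' := fun c x => rfl }
  rw [e.finrank_eq, Module.finrank_prod]

/-- Existence of a generalized inverse over ℂ. -/
lemma exists_gen_inv (B : Matrix (Fin m) (Fin k) ℂ) :
    ∃ G : Matrix (Fin k) (Fin m) ℂ, B * G * B = B := by
  set f := B.mulVecLin with hf
  obtain ⟨g₀, hg₀⟩ := f.rangeRestrict.exists_rightInverse_of_surjective f.range_rangeRestrict
  obtain ⟨q, hq⟩ := (LinearMap.range f).exists_isCompl
  set pr := (LinearMap.range f).projectionOnto q hq with hpr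
  refine ⟨LinearMap.toMatrix' (g₀.comp pr), ?_⟩
  apply Matrix.toLin'.injective
  rw [Matrix.toLin'_mul, Matrix.toLin'_mul, Matrix.toLin'_toMatrix']
  refine LinearMap.ext fun v => ?_
  simp only [LinearMap.comp_apply, Matrix.toLin'_apply]
  have hv : B *ᵥ v ∈ LinearMap.range f := ⟨v, rfl⟩
  have h1 : pr (B *ᵥ v) = ⟨B *ᵥ v, hv⟩ := by
    have := Submodule.linearProjOfIsCompl_apply_left hq (⟨B *ᵥ v, hv⟩ : LinearMap.range f)
    simpa [hpr] using this
  rw [h1]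
  have h2 := LinearMap.congr_fun hg₀ (⟨B *ᵥ v, hv⟩ : LinearMap.range f)
  have h3 : f (g₀ ⟨B *ᵥ v, hv⟩) = B *ᵥ v := congrArg Subtype.val h2
  simpa [hf] using h3

/-- Upper bound for the rank of the block matrix. -/
lemma rank_fromBlocks_le (M : Matrix (Fin m) (Fin n) ℂ) (B : Matrix (Fin m) (Fin k) ℂ)
    (C : Matrix (Fin l) (Fin n) ℂ) :
    (fromBlocks M B C (0 : Matrix (Fin l) (Fin k) ℂ)).rank ≤ M.rank + B.rank + C.rank := by
  classical
  set φ := LinearEquiv.sumArrowLequivProdArrow (Fin m) (Fin l) ℂ ℂ with hφ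
  set W := fromBlocks M B C (0 : Matrix (Fin l) (Fin k) ℂ) with hW
  set P := (LinearMap.range M.mulVecLin ⊔ LinearMap.range B.mulVecLin).prod
      (LinearMap.range C.mulVecLin) with hP
  have key : Submodule.map φ.toLinearMap (LinearMap.range W.mulVecLin)
      ≤ P := by
    rintro _ ⟨_, ⟨x, rfl⟩, rfl⟩
    simp only [LinearEquiv.coe_coe]
    have hWx : W.mulVecLin x = Sum.elim (M *ᵥ (x ∘ Sum.inl) + B *ᵥ (x ∘ Sum.inr))
        (C *ᵥ (x ∘ Sum.inl) + (0 : Matrix (Fin l) (Fin k) ℂ) *ᵥ (x ∘ Sum.inr)) := by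
      rw [Matrix.mulVecLin_apply, hW, fromBlocks_mulVec]
    refine Submodule.mem_prod.mpr ⟨?_, ?_⟩
    · have : (φ (W.mulVecLin x)).1 = M *ᵥ (x ∘ Sum.inl) + B *ᵥ (x ∘ Sum.inr) := by
        funext a
        rw [LinearEquiv.sumArrowLequivProdArrow_apply_fst, hWx]
        simp
      rw [this]
      exact Submodule.add_mem_sup ⟨x ∘ Sum.inl, rfl⟩ ⟨x ∘ Sum.inr, rfl⟩
    · have : (φ (W.mulVecLin x)).2 = C *ᵥ (x ∘ Sum.inl) := by
        funext a
        rw [LinearEquiv.sumArrowLequivProdArrow_apply_snd, hWx]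
        simp [Matrix.zero_mulVec]
      rw [this]
      exact ⟨x ∘ Sum.inl, rfl⟩
  have h1 : W.rank = finrank ℂ
      (Submodule.map φ.toLinearMap (LinearMap.range W.mulVecLin)) :=
    (LinearEquiv.finrank_map_eq φ (LinearMap.range W.mulVecLin)).symm
  have h2 := Submodule.finrank_mono key
  have h3 : finrank ℂ P = finrank ℂ ↥(LinearMap.range M.mulVecLin ⊔ LinearMap.range B.mulVecLin)
      + C.rank := by
    rw [hP, finrank_prod_submodule]; rfl
  have h4 := Submodule.finrank_sup_add_finrank_inf_eq (LinearMap.range M.mulVecLin)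
    (LinearMap.range B.mulVecLin)
  have h5 : finrank ℂ (LinearMap.range M.mulVecLin) = M.rank := rfl
  have h6 : finrank ℂ (LinearMap.range B.mulVecLin) = B.rank := rfl
  omega

/-- Exact rank of the block matrix in the reduced situation. -/
lemma rank_fromBlocks_eq (Z : Matrix (Fin m) (Fin n) ℂ) (B : Matrix (Fin m) (Fin k) ℂ)
    (C : Matrix (Fin l) (Fin n) ℂ) (E : Matrix (Fin m) (Fin m) ℂ) (F : Matrix (Fin n) (Fin n) ℂ)
    (hEB : E * B = 0) (hEZ : E * Z = Z) (hZF : Z * F = Z) (hCF : C * F = 0) :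
    (fromBlocks Z B C (0 : Matrix (Fin l) (Fin k) ℂ)).rank = Z.rank + B.rank + C.rank := by
  classical
  set φ := LinearEquiv.sumArrowLequivProdArrow (Fin m) (Fin l) ℂ ℂ with hφ
  set e := LinearEquiv.sumArrowLequivProdArrow (Fin n) (Fin k) ℂ ℂ with he
  set W := fromBlocks Z B C (0 : Matrix (Fin l) (Fin k) ℂ) with hW
  set f₁ : (Fin n ⊕ Fin k → ℂ) →ₗ[ℂ] (Fin m → ℂ) :=
    (Z.mulVecLin.coprod B.mulVecLin).comp e.toLinearMap with hf₁
  set f₂ : (Fin n ⊕ Fin k → ℂ) →ₗ[ℂ] (Fin l → ℂ) :=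
    (C.mulVecLin.comp (LinearMap.fst ℂ (Fin n → ℂ) (Fin k → ℂ))).comp
      e.toLinearMap with hf₂
  have happ₁ : ∀ x : Fin n ⊕ Fin k → ℂ, f₁ x = Z *ᵥ (x ∘ Sum.inl) + B *ᵥ (x ∘ Sum.inr) := by
    intro x
    have h1 : (e x).1 = x ∘ Sum.inl := funext fun a =>
      LinearEquiv.sumArrowLequivProdArrow_apply_fst x a
    have h2 : (e x).2 = x ∘ Sum.inr := funext fun a =>
      LinearEquiv.sumArrowLequivProdArrow_apply_snd x a
    simp [hf₁, LinearMap.coprod_apply, h1, h2]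
  have happ₂ : ∀ x : Fin n ⊕ Fin k → ℂ, f₂ x = C *ᵥ (x ∘ Sum.inl) := by
    intro x
    have h1 : (e x).1 = x ∘ Sum.inl := funext fun a =>
      LinearEquiv.sumArrowLequivProdArrow_apply_fst x a
    simp [hf₂, h1]
  have hψ : φ.toLinearMap.comp W.mulVecLin = f₁.prod f₂ := by
    apply LinearMap.ext; intro x
    have hWx : W.mulVecLin x = Sum.elim (Z *ᵥ (x ∘ Sum.inl) + B *ᵥ (x ∘ Sum.inr))
        (C *ᵥ (x ∘ Sum.inl) + (0 : Matrix (Fin l) (Fin k) ℂ) *ᵥ (x ∘ Sum.inr)) := by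
      rw [Matrix.mulVecLin_apply, hW, fromBlocks_mulVec]
    refine Prod.ext ?_ ?_
    · funext a
      show (φ (W.mulVecLin x)).1 a = (f₁ x) a
      rw [LinearEquiv.sumArrowLequivProdArrow_apply_fst, hWx, happ₁]
      simp
    · funext a
      show (φ (W.mulVecLin x)).2 a = (f₂ x) a
      rw [LinearEquiv.sumArrowLequivProdArrow_apply_snd, hWx, happ₂]
      simp [Matrix.zero_mulVec]
  have hker : LinearMap.ker f₁ ⊔ LinearMap.ker f₂ = ⊤ := by
    rw [eq_top_iff]
    rintro x -
    rw [Submodule.mem_sup]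
    refine ⟨Sum.elim ((x ∘ Sum.inl) - F *ᵥ (x ∘ Sum.inl)) 0, ?_,
      Sum.elim (F *ᵥ (x ∘ Sum.inl)) (x ∘ Sum.inr), ?_, ?_⟩
    · rw [LinearMap.mem_ker, happ₁]
      rw [Sum.elim_comp_inl, Sum.elim_comp_inr, Matrix.mulVec_sub, Matrix.mulVec_mulVec, hZF, sub_self,
        Matrix.mulVec_zero, add_zero]
    · rw [LinearMap.mem_ker, happ₂]
      rw [Sum.elim_comp_inl, Matrix.mulVec_mulVec, hCF, Matrix.zero_mulVec]
    · funext i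
      cases i with
      | inl a => simp
      | inr a => simp
  have hrange : LinearMap.range (f₁.prod f₂)
      = (LinearMap.range f₁).prod (LinearMap.range f₂) := LinearMap.range_prod_eq hker
  have hr₁ : LinearMap.range f₁ = LinearMap.range Z.mulVecLin ⊔ LinearMap.range B.mulVecLin := by
    rw [hf₁, LinearMap.range_comp, LinearEquiv.range, Submodule.map_top, LinearMap.range_coprod]
  have hr₂ : LinearMap.range f₂ = LinearMap.range C.mulVecLin := by
    have hsurj : LinearMap.range ((LinearMap.fst ℂ (Fin n → ℂ) (Fin k → ℂ)).comp
        e.toLinearMap) = ⊤ := by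
      rw [LinearMap.range_eq_top, LinearMap.coe_comp, LinearEquiv.coe_toLinearMap]
      exact LinearMap.fst_surjective.comp e.surjective
    rw [hf₂, LinearMap.comp_assoc]
    exact LinearMap.range_comp_of_range_eq_top _ hsurj
  have hdisj : LinearMap.range Z.mulVecLin ⊓ LinearMap.range B.mulVecLin = ⊥ := by
    rw [eq_bot_iff]
    rintro x hx
    obtain ⟨⟨a, ha⟩, ⟨b, hb⟩⟩ := Submodule.mem_inf.mp hx
    have hx0 : x = 0 := by
      have h1 : E *ᵥ x = x := by
        rw [← ha, Matrix.mulVecLin_apply, Matrix.mulVec_mulVec, hEZ]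
      have h2 : E *ᵥ x = 0 := by
        rw [← hb, Matrix.mulVecLin_apply, Matrix.mulVec_mulVec, hEB, Matrix.zero_mulVec]
      rw [← h1, h2]
    simp [hx0]
  -- now compute ranks
  have hrankW : W.rank = finrank ℂ (LinearMap.range (f₁.prod f₂)) := by
    have h0 : LinearMap.range (f₁.prod f₂)
        = Submodule.map φ.toLinearMap (LinearMap.range W.mulVecLin) := by
      rw [← hψ, LinearMap.range_comp]
    rw [h0]
    exact (LinearEquiv.finrank_map_eq φ (LinearMap.range W.mulVecLin)).symm
  have hsup := Submodule.finrank_sup_add_finrank_inf_eq (LinearMap.range Z.mulVecLin)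
    (LinearMap.range B.mulVecLin)
  rw [hdisj, finrank_bot, add_zero] at hsup
  rw [hrankW, hrange, hr₁, hr₂, finrank_prod_submodule, hsup]
  rfl

/-- Block rank is invariant under the shift `A ↦ A - B*X - Y*C`. -/
lemma rank_fromBlocks_shift (A : Matrix (Fin m) (Fin n) ℂ) (B : Matrix (Fin m) (Fin k) ℂ)
    (C : Matrix (Fin l) (Fin n) ℂ) (X : Matrix (Fin k) (Fin n) ℂ) (Y : Matrix (Fin m) (Fin l) ℂ) :
    (fromBlocks (A - B * X - Y * C) B C (0 : Matrix (Fin l) (Fin k) ℂ)).rank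
      = (fromBlocks A B C (0 : Matrix (Fin l) (Fin k) ℂ)).rank := by
  classical
  have h1 : fromBlocks (A - B * X - Y * C) B C (0 : Matrix (Fin l) (Fin k) ℂ)
      = fromBlocks (1 : Matrix (Fin m) (Fin m) ℂ) (-Y) 0 (1 : Matrix (Fin l) (Fin l) ℂ)
        * fromBlocks A B C (0 : Matrix (Fin l) (Fin k) ℂ)
        * fromBlocks (1 : Matrix (Fin n) (Fin n) ℂ) 0 (-X) (1 : Matrix (Fin k) (Fin k) ℂ) := by
    rw [fromBlocks_multiply, fromBlocks_multiply, fromBlocks_inj]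
    refine ⟨?_, ?_, ?_, ?_⟩ <;>
      simp only [Matrix.one_mul, Matrix.mul_one, Matrix.zero_mul, Matrix.mul_zero,
        Matrix.neg_mul, Matrix.mul_neg, add_zero, zero_add, neg_zero] <;>
      abel
  have hL : IsUnit (fromBlocks (1 : Matrix (Fin m) (Fin m) ℂ) (-Y) 0
      (1 : Matrix (Fin l) (Fin l) ℂ)).det := by
    rw [det_fromBlocks_zero₂₁]; simp
  have hR : IsUnit (fromBlocks (1 : Matrix (Fin n) (Fin n) ℂ) 0 (-X)
      (1 : Matrix (Fin k) (Fin k) ℂ)).det := by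
    rw [det_fromBlocks_zero₁₂]; simp
  rw [h1, Matrix.rank_mul_eq_left_of_isUnit_det _ _ hR,
    Matrix.rank_mul_eq_right_of_isUnit_det _ _ hL]

end MinRankF1

open MinRankF1 in
/-- Minimal rank of `A - B*X - Y*C` over all `X`, `Y`. -/
theorem min_rank_f1 (m n k l : ℕ)
    (A : Matrix (Fin m) (Fin n) ℂ) (B : Matrix (Fin m) (Fin k) ℂ)
    (C : Matrix (Fin l) (Fin n) ℂ) :
    IsLeast {r : ℤ | ∃ (X : Matrix (Fin k) (Fin n) ℂ) (Y : Matrix (Fin m) (Fin l) ℂ),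
        r = ((A - B * X - Y * C).rank : ℤ)}
      (((fromBlocks A B C 0).rank : ℤ) - (B.rank : ℤ) - (C.rank : ℤ)) := by
  obtain ⟨GB, hGB⟩ := exists_gen_inv B
  obtain ⟨GC, hGC⟩ := exists_gen_inv C
  set E : Matrix (Fin m) (Fin m) ℂ := 1 - B * GB with hE
  set F : Matrix (Fin n) (Fin n) ℂ := 1 - GC * C with hF
  set X₀ : Matrix (Fin k) (Fin n) ℂ := GB * A with hX₀
  set Y₀ : Matrix (Fin m) (Fin l) ℂ := (A - B * (GB * A)) * GC with hY₀
  set Z : Matrix (Fin m) (Fin n) ℂ := A - B * X₀ - Y₀ * C with hZ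
  have hZEF : Z = E * A * F := by
    rw [hZ, hX₀, hY₀, hE, hF]
    simp only [Matrix.sub_mul, Matrix.mul_sub, Matrix.one_mul, Matrix.mul_one, Matrix.mul_assoc]
    all_goals abel
  have hEB : E * B = 0 := by
    rw [hE, Matrix.sub_mul, Matrix.one_mul, Matrix.mul_assoc, ← Matrix.mul_assoc, hGB, sub_self]
  have hCF : C * F = 0 := by
    rw [hF, Matrix.mul_sub, Matrix.mul_one, ← Matrix.mul_assoc, hGC, sub_self]
  have hBGB : (B * GB) * (B * GB) = B * GB := by
    rw [← Matrix.mul_assoc, hGB]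
  have hEE : E * E = E := by
    rw [hE]
    simp only [Matrix.sub_mul, Matrix.mul_sub, Matrix.one_mul, Matrix.mul_one, hBGB]
    all_goals abel
  have hGCC : (GC * C) * (GC * C) = GC * C := by
    rw [← Matrix.mul_assoc, Matrix.mul_assoc GC C GC, Matrix.mul_assoc GC (C * GC) C, hGC]
  have hFF : F * F = F := by
    rw [hF]
    simp only [Matrix.sub_mul, Matrix.mul_sub, Matrix.one_mul, Matrix.mul_one, hGCC]
    all_goals abel
  have hEZ : E * Z = Z := by
    rw [hZEF, ← Matrix.mul_assoc E (E * A) F, ← Matrix.mul_assoc E E A, hEE]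
  have hZF : Z * F = Z := by
    rw [hZEF, Matrix.mul_assoc (E * A) F F, hFF]
  have hkey : (fromBlocks A B C (0 : Matrix (Fin l) (Fin k) ℂ)).rank
      = Z.rank + B.rank + C.rank := by
    rw [← rank_fromBlocks_shift A B C X₀ Y₀, ← hZ]
    exact rank_fromBlocks_eq Z B C E F hEB hEZ hZF hCF
  constructor
  · refine ⟨X₀, Y₀, ?_⟩
    rw [← hZ]
    rw [hkey]
    push_cast
    ring
  · rintro r ⟨X, Y, rfl⟩
    have h1 : (fromBlocks A B C (0 : Matrix (Fin l) (Fin k) ℂ)).rank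
        ≤ (A - B * X - Y * C).rank + B.rank + C.rank := by
      rw [← rank_fromBlocks_shift A B C X Y]
      exact rank_fromBlocks_le _ _ _
    have h2 : ((fromBlocks A B C (0 : Matrix (Fin l) (Fin k) ℂ)).rank : ℤ)
        ≤ ((A - B * X - Y * C).rank : ℤ) + B.rank + C.rank := by exact_mod_cast h1
    linarith
end

section
/- Let A ∈ ℂ^{m×n} and, for i = 1,2,3,4, let Bi ∈ ℂ^{m×k_i} and Ci ∈ ℂ^{l_i×n} be given with R(Bi) ⊆ R(B2) for i ∈ {1,3,4} and R(Cj*) ⊆ R(C1*) for j ∈ {2,3,4}. For Xi ∈ ℂ^{k_i×l_i} (i = 1,2,3,4) set f3(X1,X2,X3,X4) = A − B1·X1·C1 − B2·X2·C2 − B3·X3·C3 − B4·X4·C4. Then the maximum of r(f3(X1,X2,X3,X4)) over all such X1, X2, X3, X4 equals min{ r([A B2]), r([A; C1]), r([A B1; C2 0; C3 0; C4 0]), r([A B1 B3 B4; C2 0 0 0]), r([A B1 B3; C2 0 0; C4 0 0]), r([A B1 B4; C2 0 0; C3 0 0]) }. -/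
open Matrix

open Matrix Module Submodule

namespace TianAux

variable {R : Type*} [Field R]
variable {m n k l p q m' n' : Type*}

/-- rank is invariant under reindexing by equivalences (rectangular version). -/
lemma rank_submatrix_equiv [Fintype n] [Fintype n'] (A : Matrix m n R)
    (e₁ : m' ≃ m) (e₂ : n' ≃ n) : (A.submatrix e₁ e₂).rank = A.rank := by
  rw [Matrix.rank, Matrix.rank, Matrix.mulVecLin_submatrix, LinearMap.range_comp]
  have h2 : LinearMap.range (A.mulVecLin ∘ₗ LinearMap.funLeft R R ⇑e₂.symm)
      = LinearMap.range A.mulVecLin :=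
    LinearMap.range_comp_of_range_eq_top _ (LinearMap.range_eq_top.mpr
      (LinearMap.funLeft_surjective_of_injective R R _ e₂.symm.injective))
  rw [h2, show LinearMap.funLeft R R ⇑e₁
      = (LinearEquiv.funCongrLeft R R e₁ : (m → R) →ₗ[R] (m' → R)) from rfl]
  exact LinearEquiv.finrank_map_eq _ _

lemma rank_eq_of_submatrix [Fintype n] [Fintype n'] (A : Matrix m n R) (B : Matrix m' n' R)
    (e₁ : m' ≃ m) (e₂ : n' ≃ n) (h : B = A.submatrix e₁ e₂) : B.rank = A.rank := by
  rw [h, rank_submatrix_equiv]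

lemma rank_mul_mul_le [Fintype m] [Fintype n] [Fintype q]
    (L : Matrix p m R) (M : Matrix m n R) (N : Matrix n q R) :
    (L * M * N).rank ≤ M.rank :=
  le_trans (Matrix.rank_mul_le_left _ _) (Matrix.rank_mul_le_right _ _)

/-- factorization from range inclusion -/
lemma exists_eq_mul_of_range_le {k' : Type*} [Fintype k] [DecidableEq k] [Fintype k']
    (B1 : Matrix m k R) (B2 : Matrix m k' R)
    (h : LinearMap.range B1.mulVecLin ≤ LinearMap.range B2.mulVecLin) :
    ∃ P : Matrix k' k R, B1 = B2 * P := by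
  have hcol : ∀ j : k, ∃ p : k' → R, B2 *ᵥ p = B1 *ᵥ (Pi.single j 1) := fun j =>
    h ⟨Pi.single j 1, rfl⟩
  choose pp hp using hcol
  refine ⟨Matrix.of (fun i j => pp j i), ?_⟩
  ext i j
  have := congrFun (hp j) i
  simp only [Matrix.mulVec_single_one, Matrix.col_apply] at this
  rw [← this]
  simp [Matrix.mul_apply, Matrix.mulVec, dotProduct]

end TianAux

namespace TianAux
variable {R : Type*} [Field R]
variable {m n p q : Type*}

section Minor
variable [Fintype m] [Fintype n] [DecidableEq m] [DecidableEq n]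

lemma submatrix_eq_mul_mul (M : Matrix m n R) (f : p → m) (g : q → n) :
    M.submatrix f g
      = (1 : Matrix m m R).submatrix f id * M * (1 : Matrix n n R).submatrix id g := by
  ext i j
  simp [Matrix.mul_apply, Matrix.one_apply, Finset.sum_ite_eq, Finset.sum_ite_eq']

lemma rank_submatrix_le' [Fintype p] [Fintype q] (M : Matrix m n R) (f : p → m) (g : q → n) :
    (M.submatrix f g).rank ≤ M.rank := by
  rw [submatrix_eq_mul_mul M f g]; exact rank_mul_mul_le _ _ _

lemma isUnit_det_of_rank_eq_card (M : Matrix n n R) (h : M.rank = Fintype.card n) :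
    IsUnit M.det := by
  rw [← Matrix.isUnit_iff_isUnit_det, ← Matrix.mulVec_surjective_iff_isUnit]
  have htop : LinearMap.range M.mulVecLin = ⊤ := by
    apply Submodule.eq_top_of_finrank_eq
    have hr : finrank R (LinearMap.range M.mulVecLin) = M.rank := rfl
    rw [hr, h, Module.finrank_pi]
  intro v
  obtain ⟨w, hw⟩ := LinearMap.range_eq_top.mp htop v
  exact ⟨w, hw⟩

end Minor
end TianAux

namespace TianAux

variable {R : Type*} [Field R]
variable {m n p q : Type*}

section Minors
variable [Fintype m] [Fintype n]

lemma exists_cols_submatrix (M : Matrix m n R) (r : ℕ) (hr : M.rank = r) :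
    ∃ g : Fin r → n, (M.submatrix id g).rank = r := by
  classical
  obtain ⟨b, hbsub, hspan, hindep⟩ := exists_linearIndependent R (Set.range M.col)
  have hfin : b.Finite := hindep.setFinite
  haveI : Fintype b := hfin.fintype
  have hcard : b.toFinset.card = r := by
    rw [← finrank_span_set_eq_card hindep, hspan, ← Matrix.rank_eq_finrank_span_cols, hr]
  let e : Fin r ≃ ↥b :=
    (Finset.equivFinOfCardEq hcard).symm.trans (Equiv.subtypeEquivRight (fun x => Set.mem_toFinset))
  have hpre : ∀ i : Fin r, ∃ j : n, Mᵀ j = (e i : m → R) := fun i => hbsub (e i).2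
  choose g hg using hpre
  refine ⟨g, ?_⟩
  have hrange : Set.range (M.submatrix id g).col = b := by
    have h1 : (M.submatrix id g).col = fun i => (e i : m → R) := by
      funext i; exact hg i
    rw [h1]
    calc Set.range (fun i => (e i : m → R)) = Subtype.val '' Set.range e :=
          Set.range_comp Subtype.val e
      _ = Subtype.val '' Set.univ := by rw [Equiv.range_eq_univ]
      _ = Set.range Subtype.val := Set.image_univ
      _ = b := Subtype.range_coe
  rw [Matrix.rank_eq_finrank_span_cols, hrange, hspan, ← Matrix.rank_eq_finrank_span_cols, hr]

lemma exists_rows_submatrix (M : Matrix m n R) (r : ℕ) (hr : M.rank = r) :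
    ∃ f : Fin r → m, (M.submatrix f id).rank = r := by
  obtain ⟨g, hg⟩ := exists_cols_submatrix Mᵀ r (by rw [Matrix.rank_transpose, hr])
  refine ⟨g, ?_⟩
  have h1 : (Mᵀ.submatrix id g) = (M.submatrix g id)ᵀ := rfl
  rw [h1, Matrix.rank_transpose] at hg
  exact hg

lemma exists_isUnit_det_submatrix [DecidableEq m] [DecidableEq n]
    (M : Matrix m n R) (r : ℕ) (hr : M.rank = r) :
    ∃ (f : Fin r → m) (g : Fin r → n), IsUnit ((M.submatrix f g).det) := by
  obtain ⟨g, hg⟩ := exists_cols_submatrix M r hr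
  obtain ⟨f, hf⟩ := exists_rows_submatrix (M.submatrix id g) r hg
  have h1 : (M.submatrix id g).submatrix f id = M.submatrix f g := rfl
  rw [h1] at hf
  exact ⟨f, g, isUnit_det_of_rank_eq_card _ (by rw [hf, Fintype.card_fin])⟩

end Minors

section Line
variable [Fintype m] [Fintype n] [Fintype p] [Fintype q]

lemma eval_det_add_smul [DecidableEq n] (U V : Matrix n n R) (t : R) :
    Polynomial.eval t ((U.map Polynomial.C + (Polynomial.X : Polynomial R) • V.map Polynomial.C).det)
      = (U + t • V).det := by
  rw [← Polynomial.coe_evalRingHom, RingHom.map_det]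
  congr 1
  ext i j
  simp [Matrix.map_apply, Matrix.add_apply, Matrix.smul_apply, smul_eq_mul]
  ring

lemma exists_common_param [Infinite R] [DecidableEq n] [DecidableEq q]
    (U1 V1 : Matrix n n R) (U2 V2 : Matrix q q R) (t1 t2 : R)
    (h1 : IsUnit (U1 + t1 • V1).det) (h2 : IsUnit (U2 + t2 • V2).det) :
    ∃ t : R, IsUnit (U1 + t • V1).det ∧ IsUnit (U2 + t • V2).det := by
  set P1 := (U1.map Polynomial.C + (Polynomial.X : Polynomial R) • V1.map Polynomial.C).det with hP1def
  set P2 := (U2.map Polynomial.C + (Polynomial.X : Polynomial R) • V2.map Polynomial.C).det with hP2def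
  have hP1 : P1 ≠ 0 := by
    intro h0
    have := eval_det_add_smul U1 V1 t1
    rw [← hP1def, h0] at this
    simp at this
    exact h1.ne_zero this.symm
  have hP2 : P2 ≠ 0 := by
    intro h0
    have := eval_det_add_smul U2 V2 t2
    rw [← hP2def, h0] at this
    simp at this
    exact h2.ne_zero this.symm
  have hfin : ({x | Polynomial.IsRoot P1 x} ∪ {x | Polynomial.IsRoot P2 x}).Finite :=
    (Polynomial.finite_setOf_isRoot hP1).union (Polynomial.finite_setOf_isRoot hP2)
  obtain ⟨t, ht⟩ := hfin.infinite_compl.nonempty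
  simp only [Set.mem_compl_iff, Set.mem_union, not_or, Set.mem_setOf_eq] at ht
  refine ⟨t, ?_, ?_⟩
  · rw [isUnit_iff_ne_zero, ← eval_det_add_smul, ← hP1def]; exact ht.1
  · rw [isUnit_iff_ne_zero, ← eval_det_add_smul, ← hP2def]; exact ht.2

/-- The "line trick": two affine pencils of matrices admit a common parameter at which both
ranks are at least their values at given parameters. -/
lemma exists_rank_ge_pair [Infinite R] [DecidableEq m] [DecidableEq n] [DecidableEq p]
    [DecidableEq q] (U1 V1 : Matrix m n R) (U2 V2 : Matrix p q R) (t1 t2 : R) :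
    ∃ t : R, (U1 + t1 • V1).rank ≤ (U1 + t • V1).rank
      ∧ (U2 + t2 • V2).rank ≤ (U2 + t • V2).rank := by
  obtain ⟨f1, g1, hd1⟩ := exists_isUnit_det_submatrix (U1 + t1 • V1) _ rfl
  obtain ⟨f2, g2, hd2⟩ := exists_isUnit_det_submatrix (U2 + t2 • V2) _ rfl
  have e1 : ∀ (t : R) (f : Fin ((U1 + t1 • V1).rank) → m) (g : Fin ((U1 + t1 • V1).rank) → n),
      (U1 + t • V1).submatrix f g = U1.submatrix f g + t • V1.submatrix f g := by
    intro t f g; ext i j; simp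
  have e2 : ∀ (t : R) (f : Fin ((U2 + t2 • V2).rank) → p) (g : Fin ((U2 + t2 • V2).rank) → q),
      (U2 + t • V2).submatrix f g = U2.submatrix f g + t • V2.submatrix f g := by
    intro t f g; ext i j; simp
  rw [e1 t1] at hd1
  rw [e2 t2] at hd2
  obtain ⟨t, h1, h2⟩ := exists_common_param _ _ _ _ t1 t2 hd1 hd2
  rw [← e1 t] at h1
  rw [← e2 t] at h2
  refine ⟨t, ?_, ?_⟩
  · calc (U1 + t1 • V1).rank = ((U1 + t • V1).submatrix f1 g1).rank := by
          rw [Matrix.rank_of_isUnit _ ((Matrix.isUnit_iff_isUnit_det _).mpr h1), Fintype.card_fin]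
      _ ≤ (U1 + t • V1).rank := rank_submatrix_le' _ _ _
  · calc (U2 + t2 • V2).rank = ((U2 + t • V2).submatrix f2 g2).rank := by
          rw [Matrix.rank_of_isUnit _ ((Matrix.isUnit_iff_isUnit_det _).mpr h2), Fintype.card_fin]
      _ ≤ (U2 + t • V2).rank := rank_submatrix_le' _ _ _

end Line
end TianAux

namespace TianAux

variable {R : Type*} [Field R]
variable {m n k l : Type*}

section Key
variable [Fintype m] [Fintype n] [Fintype k] [Fintype l]

lemma range_fromCols (A : Matrix m n R) (B : Matrix m k R) :
    LinearMap.range (fromCols A B).mulVecLin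
      = LinearMap.range A.mulVecLin ⊔ LinearMap.range B.mulVecLin := by
  apply le_antisymm
  · rintro x ⟨v, rfl⟩
    have hv : v = Sum.elim (v ∘ Sum.inl) (v ∘ Sum.inr) := by funext i; cases i <;> rfl
    rw [Matrix.mulVecLin_apply, hv, fromCols_mulVec_sumElim]
    exact Submodule.add_mem_sup ⟨_, rfl⟩ ⟨_, rfl⟩
  · rw [sup_le_iff]
    constructor
    · rintro x ⟨v, rfl⟩
      exact ⟨Sum.elim v 0, by rw [Matrix.mulVecLin_apply, fromCols_mulVec_sumElim]; simp⟩
    · rintro x ⟨v, rfl⟩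
      exact ⟨Sum.elim 0 v, by rw [Matrix.mulVecLin_apply, fromCols_mulVec_sumElim]; simp⟩

lemma ker_fromRows (A : Matrix m n R) (C : Matrix l n R) :
    LinearMap.ker (fromRows A C).mulVecLin
      = LinearMap.ker A.mulVecLin ⊓ LinearMap.ker C.mulVecLin := by
  ext v
  simp only [LinearMap.mem_ker, Submodule.mem_inf, Matrix.mulVecLin_apply, fromRows_mulVec]
  constructor
  · intro h
    exact ⟨funext fun i => congrFun h (Sum.inl i), funext fun i => congrFun h (Sum.inr i)⟩
  · rintro ⟨h1, h2⟩
    funext i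
    cases i with
    | inl i => exact congrFun h1 i
    | inr i => exact congrFun h2 i

lemma exists_col_notMem (A : Matrix m n R) (B : Matrix m k R)
    (h : A.rank < (fromCols A B).rank) :
    ∃ x : k → R, B *ᵥ x ∉ LinearMap.range A.mulVecLin := by
  by_contra hc
  push_neg at hc
  have hle : LinearMap.range B.mulVecLin ≤ LinearMap.range A.mulVecLin := by
    rintro x ⟨v, rfl⟩; exact hc v
  have heq : (fromCols A B).rank = A.rank := by
    simp only [Matrix.rank]
    rw [range_fromCols, sup_eq_left.mpr hle]
  omega

lemma exists_ker_notMem (A : Matrix m n R) (C : Matrix l n R)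
    (h : A.rank < (fromRows A C).rank) :
    ∃ z : n → R, A *ᵥ z = 0 ∧ C *ᵥ z ≠ 0 := by
  by_contra hc
  push_neg at hc
  have hle : LinearMap.ker A.mulVecLin ≤ LinearMap.ker C.mulVecLin := by
    intro z hz
    simp only [LinearMap.mem_ker, Matrix.mulVecLin_apply] at *
    exact hc z hz
  have h1 := LinearMap.finrank_range_add_finrank_ker (fromRows A C).mulVecLin
  have h2 := LinearMap.finrank_range_add_finrank_ker A.mulVecLin
  rw [ker_fromRows, inf_eq_left.mpr hle] at h1
  have e1 : (fromRows A C).rank = finrank R (LinearMap.range (fromRows A C).mulVecLin) := rfl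
  have e2 : A.rank = finrank R (LinearMap.range A.mulVecLin) := rfl
  omega

lemma vecMulVec_mulVec' (u : m → R) (w : n → R) (z : n → R) :
    vecMulVec u w *ᵥ z = (w ⬝ᵥ z) • u := by
  ext i
  simp only [Matrix.mulVec, Matrix.vecMulVec_apply, dotProduct, Pi.smul_apply,
    smul_eq_mul, Finset.sum_mul]
  exact Finset.sum_congr rfl fun j _ => by ring

lemma mul_vecMulVec (B : Matrix m k R) (x : k → R) (v : l → R) :
    B * vecMulVec x v = vecMulVec (B *ᵥ x) v := by
  ext i j
  simp only [Matrix.mul_apply, Matrix.vecMulVec_apply, Matrix.mulVec, dotProduct,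
    Finset.sum_mul]
  exact Finset.sum_congr rfl fun a _ => by ring

lemma vecMulVec_mul (u : m → R) (v : l → R) (C : Matrix l n R) :
    vecMulVec u v * C = vecMulVec u (v ᵥ* C) := by
  ext i j
  simp only [Matrix.mul_apply, Matrix.vecMulVec_apply, Matrix.vecMul, dotProduct,
    Finset.mul_sum]
  exact Finset.sum_congr rfl fun a _ => by ring

lemma rank_add_rank_one (A : Matrix m n R) (u : m → R) (w : n → R)
    (hu : u ∉ LinearMap.range A.mulVecLin) (z0 : n → R) (hz0 : A *ᵥ z0 = 0)
    (hwz : w ⬝ᵥ z0 = 1) :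
    (A + vecMulVec u w).rank = A.rank + 1 := by
  have hmv : ∀ z, (A + vecMulVec u w) *ᵥ z = A *ᵥ z + (w ⬝ᵥ z) • u := by
    intro z; rw [Matrix.add_mulVec, vecMulVec_mulVec']
  have hrange : LinearMap.range (A + vecMulVec u w).mulVecLin
      = LinearMap.range A.mulVecLin ⊔ (R ∙ u) := by
    apply le_antisymm
    · rintro x ⟨v, rfl⟩
      rw [Matrix.mulVecLin_apply, hmv]
      exact Submodule.add_mem_sup ⟨v, rfl⟩
        (Submodule.smul_mem _ _ (Submodule.mem_span_singleton_self u))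
    · rw [sup_le_iff]
      constructor
      · rintro x ⟨v, rfl⟩
        refine ⟨v - (w ⬝ᵥ v) • z0, ?_⟩
        rw [Matrix.mulVecLin_apply, hmv, Matrix.mulVec_sub, Matrix.mulVec_smul, hz0,
          dotProduct_sub, dotProduct_smul, hwz]
        simp
      · rintro x hx
        obtain ⟨c, rfl⟩ := Submodule.mem_span_singleton.mp hx
        refine ⟨c • z0, ?_⟩
        rw [Matrix.mulVecLin_apply, hmv, Matrix.mulVec_smul, hz0, smul_zero, zero_add,
          dotProduct_smul, hwz]
        simp
  have hune : u ≠ 0 := fun h => hu (h ▸ Submodule.zero_mem _)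
  have hle : finrank R ↥(LinearMap.range A.mulVecLin ⊔ (R ∙ u)) ≤ A.rank + 1 := by
    have h1 := Submodule.finrank_sup_add_finrank_inf_eq (LinearMap.range A.mulVecLin) (R ∙ u)
    have h2 : finrank R (R ∙ u) = 1 := finrank_span_singleton hune
    have e2 : A.rank = finrank R (LinearMap.range A.mulVecLin) := rfl
    omega
  have hge : A.rank + 1 ≤ finrank R ↥(LinearMap.range A.mulVecLin ⊔ (R ∙ u)) := by
    have hlt : LinearMap.range A.mulVecLin < LinearMap.range A.mulVecLin ⊔ (R ∙ u) := by
      refine lt_of_le_of_ne le_sup_left ?_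
      intro hcon
      exact hu (hcon ▸ (le_sup_right (a := LinearMap.range A.mulVecLin))
        (Submodule.mem_span_singleton_self u))
    have := Submodule.finrank_lt_finrank_of_lt hlt
    have e2 : A.rank = finrank R (LinearMap.range A.mulVecLin) := rfl
    omega
  have e3 : (A + vecMulVec u w).rank
      = finrank R (LinearMap.range (A + vecMulVec u w).mulVecLin) := rfl
  rw [e3, hrange]
  omega

lemma rank_fromCols_add_vecMulVec [DecidableEq n] [DecidableEq k]
    (A : Matrix m n R) (B : Matrix m k R) (x : k → R) (w : n → R) :
    (fromCols (A + vecMulVec (B *ᵥ x) w) B).rank = (fromCols A B).rank := by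
  have h1 : fromCols (A + vecMulVec (B *ᵥ x) w) B
      = fromCols A B * (fromBlocks 1 0 (vecMulVec x w) 1 : Matrix (n ⊕ k) (n ⊕ k) R) := by
    rw [fromCols_mul_fromBlocks, mul_vecMulVec]
    simp
  rw [h1]
  apply Matrix.rank_mul_eq_left_of_isUnit_det
  rw [Matrix.det_fromBlocks_zero₁₂]
  simp

lemma rank_fromRows_add_mul [DecidableEq m] [DecidableEq l]
    (A : Matrix m n R) (C : Matrix l n R) (Y : Matrix m l R) :
    (fromRows (A + Y * C) C).rank = (fromRows A C).rank := by
  have h1 : fromRows (A + Y * C) C = (fromBlocks 1 Y 0 1 : Matrix (m ⊕ l) (m ⊕ l) R) * fromRows A C := by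
    rw [fromBlocks_mul_fromRows]; simp
  rw [h1]
  apply Matrix.rank_mul_eq_right_of_isUnit_det
  rw [Matrix.det_fromBlocks_zero₂₁]
  simp

lemma rank_le_rank_fromCols [DecidableEq n] (A : Matrix m n R) (B : Matrix m k R) :
    A.rank ≤ (fromCols A B).rank := by
  have h : A = fromCols A B * fromRows (1 : Matrix n n R) (0 : Matrix k n R) := by
    rw [fromCols_mul_fromRows]; simp
  conv_lhs => rw [h]
  exact Matrix.rank_mul_le_left _ _

lemma rank_le_rank_fromRows [DecidableEq m] (A : Matrix m n R) (C : Matrix l n R) :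
    A.rank ≤ (fromRows A C).rank := by
  have h : A = fromCols (1 : Matrix m m R) (0 : Matrix m l R) * fromRows A C := by
    rw [fromCols_mul_fromRows]; simp
  conv_lhs => rw [h]
  exact Matrix.rank_mul_le_right _ _

lemma key_rank_le [DecidableEq m] [DecidableEq n]
    (A : Matrix m n R) (B : Matrix m k R) (C : Matrix l n R) (X : Matrix k l R) :
    (A - B * X * C).rank ≤ min (fromCols A B).rank (fromRows A C).rank := by
  refine le_min ?_ ?_
  · have h : A - B * X * C = fromCols A B * fromRows (1 : Matrix n n R) (-(X * C)) := by
      rw [fromCols_mul_fromRows]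
      simp [Matrix.mul_neg, ← sub_eq_add_neg, Matrix.mul_assoc]
    rw [h]
    exact Matrix.rank_mul_le_left _ _
  · have h : A - B * X * C = fromCols (1 : Matrix m m R) (-(B * X)) * fromRows A C := by
      rw [fromCols_mul_fromRows]
      simp [Matrix.neg_mul, ← sub_eq_add_neg, Matrix.mul_assoc]
    rw [h]
    exact Matrix.rank_mul_le_right _ _

lemma key_attain [DecidableEq m] [DecidableEq n] [DecidableEq k] [DecidableEq l]
    (A : Matrix m n R) (B : Matrix m k R) (C : Matrix l n R) :
    ∃ X : Matrix k l R,
      (A - B * X * C).rank = min (fromCols A B).rank (fromRows A C).rank := by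
  suffices h : ∀ (d : ℕ) (A : Matrix m n R),
      min (fromCols A B).rank (fromRows A C).rank = A.rank + d →
      ∃ X : Matrix k l R, (A - B * X * C).rank = min (fromCols A B).rank (fromRows A C).rank by
    have hA : A.rank ≤ min (fromCols A B).rank (fromRows A C).rank :=
      le_min (rank_le_rank_fromCols A B) (rank_le_rank_fromRows A C)
    exact h (min (fromCols A B).rank (fromRows A C).rank - A.rank) A (by omega)
  intro d
  induction d with
  | zero =>
    intro A hA
    exact ⟨0, by simpa using hA.symm⟩
  | succ d ih =>
    intro A hA
    have h1 : A.rank < (fromCols A B).rank := by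
      have := min_le_left (fromCols A B).rank (fromRows A C).rank; omega
    have h2 : A.rank < (fromRows A C).rank := by
      have := min_le_right (fromCols A B).rank (fromRows A C).rank; omega
    obtain ⟨x, hx⟩ := exists_col_notMem A B h1
    obtain ⟨z0, hz0, hCz⟩ := exists_ker_notMem A C h2
    obtain ⟨b, hb⟩ : ∃ b, (C *ᵥ z0) b ≠ 0 := by
      by_contra hcon; push_neg at hcon; exact hCz (funext hcon)
    set c : R := (C *ᵥ z0) b with hc
    set v : l → R := c⁻¹ • (Pi.single b 1 : l → R) with hv
    set w : n → R := v ᵥ* C with hw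
    have hwz : w ⬝ᵥ z0 = 1 := by
      rw [hw, ← dotProduct_mulVec, hv, smul_dotProduct,
        single_dotProduct, smul_eq_mul, one_mul, ← hc]
      exact inv_mul_cancel₀ hb
    set u : m → R := B *ᵥ x with hu
    set A' := A + vecMulVec u w with hA'
    have hr1 : A'.rank = A.rank + 1 := rank_add_rank_one A u w hx z0 hz0 hwz
    have hc1 : (fromCols A' B).rank = (fromCols A B).rank :=
      rank_fromCols_add_vecMulVec A B x w
    have hr2 : (fromRows A' C).rank = (fromRows A C).rank := by
      have hA'2 : A' = A + (vecMulVec u v) * C := by rw [hA', vecMulVec_mul, ← hw]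
      rw [hA'2]
      exact rank_fromRows_add_mul A C (vecMulVec u v)
    obtain ⟨X', hX'⟩ := ih A' (by rw [hc1, hr2, hr1]; omega)
    refine ⟨X' - vecMulVec x v, ?_⟩
    have heq : A - B * (X' - vecMulVec x v) * C = A' - B * X' * C := by
      have hBv : B * vecMulVec x v * C = vecMulVec u w := by
        rw [mul_vecMulVec, vecMulVec_mul, ← hu, ← hw]
      rw [Matrix.mul_sub, Matrix.sub_mul, hBv, hA']
      abel
    rw [heq, hX', hc1, hr2]
end Key
end TianAux

namespace TianAux

variable {R : Type*} [Field R]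
variable {m n k1 l1 k2 l2 k3 l3 k4 l4 : Type*}
  [Fintype m] [Fintype n] [Fintype k1] [Fintype l1] [Fintype k2] [Fintype l2]
  [Fintype k3] [Fintype l3] [Fintype k4] [Fintype l4]
  [DecidableEq m] [DecidableEq n] [DecidableEq k1] [DecidableEq l1] [DecidableEq k2]
  [DecidableEq l2] [DecidableEq k3] [DecidableEq l3] [DecidableEq k4] [DecidableEq l4]

variable (A : Matrix m n R)
  (B1 : Matrix m k1 R) (C1 : Matrix l1 n R)
  (B2 : Matrix m k2 R) (C2 : Matrix l2 n R)
  (B3 : Matrix m k3 R) (C3 : Matrix l3 n R)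
  (B4 : Matrix m k4 R) (C4 : Matrix l4 n R)

lemma upper_bound
    (P : Matrix k2 k1 R) (Q : Matrix k2 k3 R) (S : Matrix k2 k4 R)
    (T : Matrix l2 l1 R) (U : Matrix l3 l1 R) (V : Matrix l4 l1 R)
    (hP : B1 = B2 * P) (hQ : B3 = B2 * Q) (hS : B4 = B2 * S)
    (hT : C2 = T * C1) (hU : C3 = U * C1) (hV : C4 = V * C1)
    (X1 : Matrix k1 l1 R) (X2 : Matrix k2 l2 R) (X3 : Matrix k3 l3 R) (X4 : Matrix k4 l4 R) :
    (A - B1 * X1 * C1 - B2 * X2 * C2 - B3 * X3 * C3 - B4 * X4 * C4).rank ≤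
      min (min (fromCols A B2).rank (fromRows A C1).rank)
        (min (min (fromBlocks A B1 (fromRows C2 (fromRows C3 C4)) 0).rank
                  (fromBlocks A (fromCols B1 (fromCols B3 B4)) C2 0).rank)
             (min (fromBlocks A (fromCols B1 B3) (fromRows C2 C4) 0).rank
                  (fromBlocks A (fromCols B1 B4) (fromRows C2 C3) 0).rank)) := by
  set f := A - B1 * X1 * C1 - B2 * X2 * C2 - B3 * X3 * C3 - B4 * X4 * C4 with hf
  have hb1 : f.rank ≤ (fromCols A B2).rank := by
    have h : f = fromCols A B2 *
        fromRows (1 : Matrix n n R) (-(P * X1 * C1 + X2 * C2 + Q * X3 * C3 + S * X4 * C4)) := by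
      rw [fromCols_mul_fromRows, hf, hP, hQ, hS]
      simp only [Matrix.mul_one, Matrix.mul_neg, Matrix.mul_add, Matrix.mul_assoc]
      abel
    rw [h]; exact Matrix.rank_mul_le_left _ _
  have hb2 : f.rank ≤ (fromRows A C1).rank := by
    have h : f = fromCols (1 : Matrix m m R)
        (-(B1 * X1 + B2 * X2 * T + B3 * X3 * U + B4 * X4 * V)) * fromRows A C1 := by
      rw [fromCols_mul_fromRows, hf, hT, hU, hV]
      simp only [Matrix.one_mul, Matrix.neg_mul, Matrix.add_mul, Matrix.mul_assoc]
      abel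
    rw [h]; exact Matrix.rank_mul_le_right _ _
  have hb3 : f.rank ≤ (fromBlocks A B1 (fromRows C2 (fromRows C3 C4)) 0).rank := by
    have h : f = fromCols (1 : Matrix m m R) (fromCols (-(B2 * X2)) (fromCols (-(B3 * X3)) (-(B4 * X4))))
        * fromBlocks A B1 (fromRows C2 (fromRows C3 C4)) 0
        * fromRows (1 : Matrix n n R) (-(X1 * C1)) := by
      simp only [fromCols_mul_fromBlocks, fromCols_mul_fromRows, Matrix.one_mul,
        Matrix.mul_one, Matrix.mul_zero, add_zero, Matrix.mul_neg, Matrix.neg_mul, hf,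
        Matrix.mul_assoc]
      abel
    rw [h]; exact rank_mul_mul_le _ _ _
  have hb4 : f.rank ≤ (fromBlocks A (fromCols B1 (fromCols B3 B4)) C2 0).rank := by
    have h : f = fromCols (1 : Matrix m m R) (-(B2 * X2))
        * fromBlocks A (fromCols B1 (fromCols B3 B4)) C2 0
        * fromRows (1 : Matrix n n R) (fromRows (-(X1 * C1)) (fromRows (-(X3 * C3)) (-(X4 * C4)))) := by
      simp only [fromCols_mul_fromBlocks, fromCols_mul_fromRows, Matrix.one_mul,
        Matrix.mul_one, Matrix.mul_zero, add_zero, Matrix.mul_neg, Matrix.neg_mul, hf,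
        Matrix.mul_assoc]
      abel
    rw [h]; exact rank_mul_mul_le _ _ _
  have hb5 : f.rank ≤ (fromBlocks A (fromCols B1 B3) (fromRows C2 C4) 0).rank := by
    have h : f = fromCols (1 : Matrix m m R) (fromCols (-(B2 * X2)) (-(B4 * X4)))
        * fromBlocks A (fromCols B1 B3) (fromRows C2 C4) 0
        * fromRows (1 : Matrix n n R) (fromRows (-(X1 * C1)) (-(X3 * C3))) := by
      simp only [fromCols_mul_fromBlocks, fromCols_mul_fromRows, Matrix.one_mul,
        Matrix.mul_one, Matrix.mul_zero, add_zero, Matrix.mul_neg, Matrix.neg_mul, hf,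
        Matrix.mul_assoc]
      abel
    rw [h]; exact rank_mul_mul_le _ _ _
  have hb6 : f.rank ≤ (fromBlocks A (fromCols B1 B4) (fromRows C2 C3) 0).rank := by
    have h : f = fromCols (1 : Matrix m m R) (fromCols (-(B2 * X2)) (-(B3 * X3)))
        * fromBlocks A (fromCols B1 B4) (fromRows C2 C3) 0
        * fromRows (1 : Matrix n n R) (fromRows (-(X1 * C1)) (-(X4 * C4))) := by
      simp only [fromCols_mul_fromBlocks, fromCols_mul_fromRows, Matrix.one_mul,
        Matrix.mul_one, Matrix.mul_zero, add_zero, Matrix.mul_neg, Matrix.neg_mul, hf,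
        Matrix.mul_assoc]
      abel
    rw [h]; exact rank_mul_mul_le _ _ _
  omega

end TianAux

namespace TianAux

variable {R : Type*} [Field R]
variable {m n k1 l1 k2 l2 k3 l3 k4 l4 : Type*}
  [Fintype m] [Fintype n] [Fintype k1] [Fintype l1] [Fintype k2] [Fintype l2]
  [Fintype k3] [Fintype l3] [Fintype k4] [Fintype l4]

variable (A : Matrix m n R)
  (B1 : Matrix m k1 R) (C1 : Matrix l1 n R)
  (B2 : Matrix m k2 R) (C2 : Matrix l2 n R)
  (B3 : Matrix m k3 R) (C3 : Matrix l3 n R)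
  (B4 : Matrix m k4 R) (C4 : Matrix l4 n R)

lemma glueG1 :
    (fromCols (fromCols (fromBlocks A B1 C2 0) (fromRows B3 0)) (fromRows B4 0)).rank
      = (fromBlocks A (fromCols B1 (fromCols B3 B4)) C2 0).rank := by
  apply rank_eq_of_submatrix _ _ (Equiv.refl _)
    ((Equiv.sumAssoc (n ⊕ k1) k3 k4).trans (Equiv.sumAssoc n k1 (k3 ⊕ k4)))
  ext i j
  rcases j with ((j | j) | j) | j <;> rcases i with i | i <;>
    simp [Matrix.submatrix_apply, Equiv.sumAssoc]

lemma glueG2 :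
    (fromRows (fromCols (fromBlocks A B1 C2 0) (fromRows B3 0))
        (fromCols (fromCols C4 0) 0)).rank
      = (fromBlocks A (fromCols B1 B3) (fromRows C2 C4) 0).rank := by
  apply rank_eq_of_submatrix _ _ (Equiv.sumAssoc m l2 l4) (Equiv.sumAssoc n k1 k3)
  ext i j
  rcases j with (j | j) | j <;> rcases i with (i | i) | i <;>
    simp [Matrix.submatrix_apply, Equiv.sumAssoc]

lemma glueG3 :
    (fromCols (fromRows (fromBlocks A B1 C2 0) (fromCols C3 0))
        (fromRows (fromRows B4 0) 0)).rank
      = (fromBlocks A (fromCols B1 B4) (fromRows C2 C3) 0).rank := by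
  apply rank_eq_of_submatrix _ _ (Equiv.sumAssoc m l2 l3) (Equiv.sumAssoc n k1 k4)
  ext i j
  rcases j with (j | j) | j <;> rcases i with (i | i) | i <;>
    simp [Matrix.submatrix_apply, Equiv.sumAssoc]

lemma glueG4 :
    (fromRows (fromRows (fromBlocks A B1 C2 0) (fromCols C3 0)) (fromCols C4 0)).rank
      = (fromBlocks A B1 (fromRows C2 (fromRows C3 C4)) 0).rank := by
  apply rank_eq_of_submatrix _ _
    ((Equiv.sumAssoc (m ⊕ l2) l3 l4).trans (Equiv.sumAssoc m l2 (l3 ⊕ l4))) (Equiv.refl _)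
  ext i j
  rcases j with j | j <;> rcases i with ((i | i) | i) | i <;>
    simp [Matrix.submatrix_apply, Equiv.sumAssoc]

end TianAux

namespace TianAux

variable {R : Type*} [Field R]
variable {m n k1 l1 k2 l2 k3 l3 k4 l4 : Type*}
  [Fintype m] [Fintype n] [Fintype k1] [Fintype l1] [Fintype k2] [Fintype l2]
  [Fintype k3] [Fintype l3] [Fintype k4] [Fintype l4]
  [DecidableEq m] [DecidableEq n] [DecidableEq k1] [DecidableEq l1] [DecidableEq k2]
  [DecidableEq l2] [DecidableEq k3] [DecidableEq l3] [DecidableEq k4] [DecidableEq l4]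

variable (A : Matrix m n R)
  (B1 : Matrix m k1 R) (C1 : Matrix l1 n R)
  (B2 : Matrix m k2 R) (C2 : Matrix l2 n R)
  (B3 : Matrix m k3 R) (C3 : Matrix l3 n R)
  (B4 : Matrix m k4 R) (C4 : Matrix l4 n R)

/-- I1 -/
lemma identI1 (Y : Matrix k4 l4 R) :
    fromCols (fromBlocks A B1 C2 0) (fromRows B3 0)
        - fromRows B4 0 * Y * fromCols (fromCols C4 0) 0
      = fromCols (fromBlocks (A - B4 * Y * C4) B1 C2 0) (fromRows B3 0) := by
  have h : (fromRows B4 0 : Matrix (m ⊕ l2) k4 R) * Y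
        * (fromCols (fromCols C4 0) 0 : Matrix l4 ((n ⊕ k1) ⊕ k3) R)
      = fromBlocks (fromCols (B4 * Y * C4) 0) 0 0 0 := by
    rw [fromRows_mul, Matrix.zero_mul, fromRows_mul_fromCols, Matrix.mul_fromCols]
    simp [Matrix.mul_zero, Matrix.zero_mul]
  rw [h]
  ext i j
  rcases i with i | i <;> rcases j with (j | j) | j <;> simp

/-- I2 -/
lemma identI2 (Y : Matrix k4 l4 R) :
    fromRows (fromBlocks A B1 C2 0) (fromCols C3 0)
        - fromRows (fromRows B4 0) 0 * Y * fromCols C4 0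
      = fromRows (fromBlocks (A - B4 * Y * C4) B1 C2 0) (fromCols C3 0) := by
  have h : (fromRows (fromRows B4 0) 0 : Matrix ((m ⊕ l2) ⊕ l3) k4 R) * Y
        * (fromCols C4 0 : Matrix l4 (n ⊕ k1) R)
      = fromRows (fromRows (fromCols (B4 * Y * C4) 0) 0) 0 := by
    rw [fromRows_mul, fromRows_mul, Matrix.zero_mul, Matrix.zero_mul,
      fromRows_mul, fromRows_mul, Matrix.zero_mul, Matrix.zero_mul, Matrix.mul_fromCols]
    simp [Matrix.mul_zero]
  rw [h]
  ext i j
  rcases i with (i | i) | i <;> rcases j with j | j <;> simp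

/-- I3 -/
lemma identI3 (D : Matrix m n R) (Y : Matrix k3 l3 R) :
    fromBlocks D B1 C2 0 - fromRows B3 0 * Y * fromCols C3 0
      = fromBlocks (D - B3 * Y * C3) B1 C2 0 := by
  have h : (fromRows B3 0 : Matrix (m ⊕ l2) k3 R) * Y
        * (fromCols C3 0 : Matrix l3 (n ⊕ k1) R)
      = fromBlocks (B3 * Y * C3) 0 0 0 := by
    rw [fromRows_mul, Matrix.zero_mul, fromRows_mul_fromCols]
    simp [Matrix.mul_zero, Matrix.zero_mul]
  rw [h]
  ext i j
  rcases i with i | i <;> rcases j with j | j <;> simp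

/-- I5 -/
lemma identI5 (G : Matrix m n R) (Y : Matrix k1 l1 R) :
    fromRows G C2 - fromRows B1 0 * Y * C1 = fromRows (G - B1 * Y * C1) C2 := by
  have h : (fromRows B1 0 : Matrix (m ⊕ l2) k1 R) * Y * C1 = fromRows (B1 * Y * C1) 0 := by
    rw [fromRows_mul, Matrix.zero_mul, fromRows_mul, Matrix.zero_mul]
  rw [h]
  ext i j
  rcases i with i | i <;> simp

/-- G5 : appending C1 under rows already in the row space of C1 -/
lemma glueG5 (W : Matrix m l1 R) (T : Matrix l2 l1 R) :
    (fromRows (fromRows (A - W * C1) (T * C1)) C1).rank = (fromRows A C1).rank := by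
  apply le_antisymm
  · have h : fromRows (fromRows (A - W * C1) (T * C1)) C1
        = (fromRows (fromRows (fromCols 1 (-W)) (fromCols 0 T)) (fromCols 0 1) :
              Matrix ((m ⊕ l2) ⊕ l1) (m ⊕ l1) R)
          * fromRows A C1 := by
      rw [fromRows_mul, fromRows_mul, fromCols_mul_fromRows, fromCols_mul_fromRows,
        fromCols_mul_fromRows]
      simp only [Matrix.one_mul, Matrix.zero_mul, Matrix.neg_mul, zero_add, add_zero,
        ← sub_eq_add_neg]
    rw [h]; exact Matrix.rank_mul_le_right _ _
  · have h : fromRows A C1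
        = (fromRows (fromCols (fromCols 1 0) W) (fromCols (fromCols 0 0) 1) :
              Matrix (m ⊕ l1) ((m ⊕ l2) ⊕ l1) R)
          * fromRows (fromRows (A - W * C1) (T * C1)) C1 := by
      rw [fromRows_mul, fromCols_mul_fromRows, fromCols_mul_fromRows,
        fromCols_mul_fromRows, fromCols_mul_fromRows]
      simp only [Matrix.one_mul, Matrix.zero_mul, zero_add, add_zero, Matrix.mul_one,
        sub_add_cancel]
    rw [h]
    exact Matrix.rank_mul_le_right _ _
end TianAux

namespace TianAux

variable {R : Type*} [Field R]
variable {m n k1 l1 k2 l2 k3 l3 k4 l4 : Type*}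
  [Fintype m] [Fintype n] [Fintype k1] [Fintype l1] [Fintype k2] [Fintype l2]
  [Fintype k3] [Fintype l3] [Fintype k4] [Fintype l4]
  [DecidableEq m] [DecidableEq n] [DecidableEq k1] [DecidableEq l1] [DecidableEq k2]
  [DecidableEq l2] [DecidableEq k3] [DecidableEq l3] [DecidableEq k4] [DecidableEq l4]

variable (A : Matrix m n R)
  (B1 : Matrix m k1 R) (C1 : Matrix l1 n R)
  (B2 : Matrix m k2 R) (C2 : Matrix l2 n R)
  (B3 : Matrix m k3 R) (C3 : Matrix l3 n R)
  (B4 : Matrix m k4 R) (C4 : Matrix l4 n R)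

lemma glueG6 (W2 : Matrix k2 n R) :
    (fromCols (A - B2 * W2) B2).rank = (fromCols A B2).rank := by
  have h : fromCols (A - B2 * W2) B2 = fromCols A B2 * (fromBlocks 1 0 (-W2) 1 : Matrix (n ⊕ k2) (n ⊕ k2) R) := by
    rw [fromCols_mul_fromBlocks]
    simp [Matrix.mul_neg, ← sub_eq_add_neg]
  rw [h]
  apply Matrix.rank_mul_eq_left_of_isUnit_det
  rw [Matrix.det_fromBlocks_zero₁₂]
  simp

set_option maxHeartbeats 1600000 in
lemma attain [Infinite R]
    (P : Matrix k2 k1 R) (Q : Matrix k2 k3 R) (S : Matrix k2 k4 R)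
    (T : Matrix l2 l1 R) (U : Matrix l3 l1 R) (V : Matrix l4 l1 R)
    (hP : B1 = B2 * P) (hQ : B3 = B2 * Q) (hS : B4 = B2 * S)
    (hT : C2 = T * C1) (hU : C3 = U * C1) (hV : C4 = V * C1) :
    ∃ (X1 : Matrix k1 l1 R) (X2 : Matrix k2 l2 R) (X3 : Matrix k3 l3 R) (X4 : Matrix k4 l4 R),
      (A - B1 * X1 * C1 - B2 * X2 * C2 - B3 * X3 * C3 - B4 * X4 * C4).rank =
      min (min (fromCols A B2).rank (fromRows A C1).rank)
        (min (min (fromBlocks A B1 (fromRows C2 (fromRows C3 C4)) 0).rank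
                  (fromBlocks A (fromCols B1 (fromCols B3 B4)) C2 0).rank)
             (min (fromBlocks A (fromCols B1 B3) (fromRows C2 C4) 0).rank
                  (fromBlocks A (fromCols B1 B4) (fromRows C2 C3) 0).rank)) := by
  classical
  obtain ⟨X4a, hX4a⟩ := key_attain (fromCols (fromBlocks A B1 C2 0) (fromRows B3 0))
      (fromRows B4 0) (fromCols (fromCols C4 0) 0)
  obtain ⟨X4b, hX4b⟩ := key_attain (fromRows (fromBlocks A B1 C2 0) (fromCols C3 0))
      (fromRows (fromRows B4 0) 0) (fromCols C4 0)
  rw [glueG1, glueG2] at hX4a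
  rw [glueG3, glueG4] at hX4b
  obtain ⟨t, ht1, ht2⟩ := exists_rank_ge_pair
    (fromCols (fromBlocks A B1 C2 0) (fromRows B3 0)
      - fromRows B4 0 * X4a * fromCols (fromCols C4 0) 0)
    ((fromCols (fromBlocks A B1 C2 0) (fromRows B3 0)
      - fromRows B4 0 * X4b * fromCols (fromCols C4 0) 0)
     - (fromCols (fromBlocks A B1 C2 0) (fromRows B3 0)
      - fromRows B4 0 * X4a * fromCols (fromCols C4 0) 0))
    (fromRows (fromBlocks A B1 C2 0) (fromCols C3 0)
      - fromRows (fromRows B4 0) 0 * X4a * fromCols C4 0)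
    ((fromRows (fromBlocks A B1 C2 0) (fromCols C3 0)
      - fromRows (fromRows B4 0) 0 * X4b * fromCols C4 0)
     - (fromRows (fromBlocks A B1 C2 0) (fromCols C3 0)
      - fromRows (fromRows B4 0) 0 * X4a * fromCols C4 0))
    (0 : R) (1 : R)
  rw [zero_smul, add_zero] at ht1
  rw [one_smul] at ht2
  have hsimp2 : ∀ (Z W : Matrix ((m ⊕ l2) ⊕ l3) (n ⊕ k1) R), Z + (W - Z) = W := fun Z W => by
    abel
  rw [hsimp2] at ht2
  set X4 : Matrix k4 l4 R := X4a + t • (X4b - X4a) with hX4def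
  have hfam1 : fromCols (fromBlocks A B1 C2 0) (fromRows B3 0)
      - fromRows B4 0 * X4 * fromCols (fromCols C4 0) 0
      = (fromCols (fromBlocks A B1 C2 0) (fromRows B3 0)
          - fromRows B4 0 * X4a * fromCols (fromCols C4 0) 0)
        + t • ((fromCols (fromBlocks A B1 C2 0) (fromRows B3 0)
          - fromRows B4 0 * X4b * fromCols (fromCols C4 0) 0)
         - (fromCols (fromBlocks A B1 C2 0) (fromRows B3 0)
          - fromRows B4 0 * X4a * fromCols (fromCols C4 0) 0)) := by
    rw [hX4def]
    simp only [Matrix.mul_add, Matrix.add_mul, Matrix.mul_sub, Matrix.sub_mul,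
      Matrix.mul_smul, Matrix.smul_mul, smul_sub]
    module
  have hfam2 : fromRows (fromBlocks A B1 C2 0) (fromCols C3 0)
      - fromRows (fromRows B4 0) 0 * X4 * fromCols C4 0
      = (fromRows (fromBlocks A B1 C2 0) (fromCols C3 0)
          - fromRows (fromRows B4 0) 0 * X4a * fromCols C4 0)
        + t • ((fromRows (fromBlocks A B1 C2 0) (fromCols C3 0)
          - fromRows (fromRows B4 0) 0 * X4b * fromCols C4 0)
         - (fromRows (fromBlocks A B1 C2 0) (fromCols C3 0)
          - fromRows (fromRows B4 0) 0 * X4a * fromCols C4 0)) := by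
    rw [hX4def]
    simp only [Matrix.mul_add, Matrix.add_mul, Matrix.mul_sub, Matrix.sub_mul,
      Matrix.mul_smul, Matrix.smul_mul, smul_sub]
    module
  have hN1 : (fromCols (fromBlocks A B1 C2 0) (fromRows B3 0)
      - fromRows B4 0 * X4 * fromCols (fromCols C4 0) 0).rank
      = min (fromBlocks A (fromCols B1 (fromCols B3 B4)) C2 0).rank
            (fromBlocks A (fromCols B1 B3) (fromRows C2 C4) 0).rank := by
    refine le_antisymm ?_ ?_
    · have hle1 := key_rank_le (fromCols (fromBlocks A B1 C2 0) (fromRows B3 0))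
        (fromRows B4 0) (fromCols (fromCols C4 0) 0) X4
      rwa [glueG1, glueG2] at hle1
    · rw [hfam1, ← hX4a]
      exact ht1
  have hN2 : (fromRows (fromBlocks A B1 C2 0) (fromCols C3 0)
      - fromRows (fromRows B4 0) 0 * X4 * fromCols C4 0).rank
      = min (fromBlocks A (fromCols B1 B4) (fromRows C2 C3) 0).rank
            (fromBlocks A B1 (fromRows C2 (fromRows C3 C4)) 0).rank := by
    refine le_antisymm ?_ ?_
    · have hle2 := key_rank_le (fromRows (fromBlocks A B1 C2 0) (fromCols C3 0))
        (fromRows (fromRows B4 0) 0) (fromCols C4 0) X4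
      rwa [glueG3, glueG4] at hle2
    · rw [hfam2, ← hX4b]
      exact ht2
  rw [identI1] at hN1
  rw [identI2] at hN2
  -- Step 2 : choose X3
  obtain ⟨X3, hX3⟩ := key_attain (fromBlocks (A - B4 * X4 * C4) B1 C2 0)
      (fromRows B3 0) (fromCols C3 0)
  rw [hN1, hN2, identI3] at hX3
  -- Step 3 : choose X1
  obtain ⟨X1, hX1⟩ := key_attain (fromRows (A - B4 * X4 * C4 - B3 * X3 * C3) C2)
      (fromRows B1 0) C1
  rw [identI5, fromCols_fromRows_eq_fromBlocks, hX3] at hX1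
  have hG5 : (fromRows (fromRows (A - B4 * X4 * C4 - B3 * X3 * C3) C2) C1).rank
      = (fromRows A C1).rank := by
    have hGW : A - B4 * X4 * C4 - B3 * X3 * C3
        = A - (B4 * (X4 * V) + B3 * (X3 * U)) * C1 := by
      rw [hU, hV]
      simp only [Matrix.add_mul, Matrix.mul_assoc]
      abel
    rw [hGW, hT]
    apply glueG5
  rw [hG5] at hX1
  -- Step 4 : choose X2
  obtain ⟨X2, hX2⟩ := key_attain (A - B4 * X4 * C4 - B3 * X3 * C3 - B1 * X1 * C1) B2 C2
  have hG6 : (fromCols (A - B4 * X4 * C4 - B3 * X3 * C3 - B1 * X1 * C1) B2).rank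
      = (fromCols A B2).rank := by
    have hHW : A - B4 * X4 * C4 - B3 * X3 * C3 - B1 * X1 * C1
        = A - B2 * (S * (X4 * C4) + Q * (X3 * C3) + P * (X1 * C1)) := by
      rw [hP, hQ, hS]
      simp only [Matrix.mul_add, Matrix.mul_assoc]
      abel
    rw [hHW]
    apply glueG6
  rw [hG6, hX1] at hX2
  refine ⟨X1, X2, X3, X4, ?_⟩
  have hfH : A - B1 * X1 * C1 - B2 * X2 * C2 - B3 * X3 * C3 - B4 * X4 * C4
      = A - B4 * X4 * C4 - B3 * X3 * C3 - B1 * X1 * C1 - B2 * X2 * C2 := by abel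
  rw [hfH, hX2]
  omega

end TianAux


/-- Maximal rank of `A - B1*X1*C1 - B2*X2*C2 - B3*X3*C3 - B4*X4*C4` under range inclusions. -/
theorem max_rank_f3 (m n k1 l1 k2 l2 k3 l3 k4 l4 : ℕ)
    (A : Matrix (Fin m) (Fin n) ℂ)
    (B1 : Matrix (Fin m) (Fin k1) ℂ) (C1 : Matrix (Fin l1) (Fin n) ℂ)
    (B2 : Matrix (Fin m) (Fin k2) ℂ) (C2 : Matrix (Fin l2) (Fin n) ℂ)
    (B3 : Matrix (Fin m) (Fin k3) ℂ) (C3 : Matrix (Fin l3) (Fin n) ℂ)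
    (B4 : Matrix (Fin m) (Fin k4) ℂ) (C4 : Matrix (Fin l4) (Fin n) ℂ)
    (hB1 : LinearMap.range B1.mulVecLin ≤ LinearMap.range B2.mulVecLin)
    (hB3 : LinearMap.range B3.mulVecLin ≤ LinearMap.range B2.mulVecLin)
    (hB4 : LinearMap.range B4.mulVecLin ≤ LinearMap.range B2.mulVecLin)
    (hC2 : LinearMap.range C2ᴴ.mulVecLin ≤ LinearMap.range C1ᴴ.mulVecLin)
    (hC3 : LinearMap.range C3ᴴ.mulVecLin ≤ LinearMap.range C1ᴴ.mulVecLin)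
    (hC4 : LinearMap.range C4ᴴ.mulVecLin ≤ LinearMap.range C1ᴴ.mulVecLin) :
    IsGreatest {r : ℕ | ∃ (X1 : Matrix (Fin k1) (Fin l1) ℂ) (X2 : Matrix (Fin k2) (Fin l2) ℂ)
        (X3 : Matrix (Fin k3) (Fin l3) ℂ) (X4 : Matrix (Fin k4) (Fin l4) ℂ),
        r = (A - B1 * X1 * C1 - B2 * X2 * C2 - B3 * X3 * C3 - B4 * X4 * C4).rank}
      (min (min (fromCols A B2).rank (fromRows A C1).rank)
        (min (min (fromBlocks A B1 (fromRows C2 (fromRows C3 C4)) 0).rank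
                  (fromBlocks A (fromCols B1 (fromCols B3 B4)) C2 0).rank)
             (min (fromBlocks A (fromCols B1 B3) (fromRows C2 C4) 0).rank
                  (fromBlocks A (fromCols B1 B4) (fromRows C2 C3) 0).rank))) := by
  obtain ⟨P, hP⟩ := TianAux.exists_eq_mul_of_range_le B1 B2 hB1
  obtain ⟨Q, hQ⟩ := TianAux.exists_eq_mul_of_range_le B3 B2 hB3
  obtain ⟨S, hS⟩ := TianAux.exists_eq_mul_of_range_le B4 B2 hB4
  obtain ⟨T', hT'⟩ := TianAux.exists_eq_mul_of_range_le C2ᴴ C1ᴴ hC2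
  obtain ⟨U', hU'⟩ := TianAux.exists_eq_mul_of_range_le C3ᴴ C1ᴴ hC3
  obtain ⟨V', hV'⟩ := TianAux.exists_eq_mul_of_range_le C4ᴴ C1ᴴ hC4
  have hT : C2 = T'ᴴ * C1 := by
    have := congrArg Matrix.conjTranspose hT'
    simpa [Matrix.conjTranspose_mul] using this
  have hU : C3 = U'ᴴ * C1 := by
    have := congrArg Matrix.conjTranspose hU'
    simpa [Matrix.conjTranspose_mul] using this
  have hV : C4 = V'ᴴ * C1 := by
    have := congrArg Matrix.conjTranspose hV'
    simpa [Matrix.conjTranspose_mul] using this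
  constructor
  · obtain ⟨X1, X2, X3, X4, h⟩ := TianAux.attain A B1 C1 B2 C2 B3 C3 B4 C4 P Q S T'ᴴ U'ᴴ V'ᴴ
      hP hQ hS hT hU hV
    exact ⟨X1, X2, X3, X4, h.symm⟩
  · rintro r ⟨X1, X2, X3, X4, rfl⟩
    exact TianAux.upper_bound A B1 C1 B2 C2 B3 C3 B4 C4 P Q S T'ᴴ U'ᴴ V'ᴴ
      hP hQ hS hT hU hV X1 X2 X3 X4
end

section
/- Let A ∈ ℂ^{m×n}, B ∈ ℂ^{m×p1}, C ∈ ℂ^{m×p2}, D ∈ ℂ^{q1×n}, E ∈ ℂ^{q2×n} be given. Then the matrix equation B·X·D + C·Y·E = A has a solution (X, Y) with X ∈ ℂ^{p1×q1} and Y ∈ ℂ^{p2×q2} if and only if the following four rank equalities hold: r([A C B]) = r([C B]), r([A; D; E]) = r([D; E]), r([A B; E 0]) = r([0 B; E 0]), and r([A C; D 0]) = r([0 C; D 0]). -/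
set_option synthInstance.maxHeartbeats 1000000
set_option maxHeartbeats 1000000
open Matrix LinearMap Submodule

variable {K : Type*} [Field K]

/-- Factor a linear map through another with larger range. -/
theorem aux_factor_range {V₁ V₂ W : Type*} [AddCommGroup V₁] [Module K V₁]
    [AddCommGroup V₂] [Module K V₂] [AddCommGroup W] [Module K W]
    (a : V₁ →ₗ[K] W) (b : V₂ →ₗ[K] W) (h : LinearMap.range a ≤ LinearMap.range b) :
    ∃ z : V₁ →ₗ[K] V₂, a = b ∘ₗ z := by
  obtain ⟨s, hs⟩ := (b.rangeRestrict).exists_rightInverse_of_surjective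
      (LinearMap.range_eq_top.mpr b.surjective_rangeRestrict)
  set a' := a.codRestrict (LinearMap.range b) (fun x => h (LinearMap.mem_range_self a x)) with ha'
  refine ⟨s ∘ₗ a', ?_⟩
  ext x
  have h2 : b.rangeRestrict (s (a' x)) = a' x := by
    have := congrFun (congrArg DFunLike.coe hs) (a' x)
    exact this
  have := congrArg (Subtype.val) h2
  simpa [a'] using this.symm

/-- Factor a linear map through another with smaller kernel: `f = w ∘ e`. -/
theorem aux_factor_ker {V W₁ W₂ : Type*} [AddCommGroup V] [Module K V]
    [AddCommGroup W₁] [Module K W₁] [AddCommGroup W₂] [Module K W₂]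
    (e : V →ₗ[K] W₁) (f : V →ₗ[K] W₂) (h : LinearMap.ker e ≤ LinearMap.ker f) :
    ∃ w : W₁ →ₗ[K] W₂, f = w ∘ₗ e := by
  obtain ⟨s, hs⟩ := (e.rangeRestrict).exists_rightInverse_of_surjective
      (LinearMap.range_eq_top.mpr e.surjective_rangeRestrict)
  obtain ⟨q, hq⟩ := (LinearMap.range e).exists_isCompl
  refine ⟨f ∘ₗ s ∘ₗ (Submodule.linearProjOfIsCompl _ q hq), ?_⟩
  ext x
  have hπ : (Submodule.linearProjOfIsCompl _ q hq) (e x) = ⟨e x, LinearMap.mem_range_self e x⟩ :=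
    Submodule.linearProjOfIsCompl_apply_left hq ⟨e x, LinearMap.mem_range_self e x⟩
  have h2 : e.rangeRestrict (s ⟨e x, LinearMap.mem_range_self e x⟩)
      = ⟨e x, LinearMap.mem_range_self e x⟩ := by
    have := congrFun (congrArg DFunLike.coe hs) (⟨e x, LinearMap.mem_range_self e x⟩ :
      LinearMap.range e)
    exact this
  have h3 : e (s ⟨e x, LinearMap.mem_range_self e x⟩) = e x := congrArg Subtype.val h2
  have h4 : s ⟨e x, LinearMap.mem_range_self e x⟩ - x ∈ LinearMap.ker f := by
    apply h
    simp [LinearMap.mem_ker, map_sub, h3]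
  simp only [LinearMap.coe_comp, Function.comp_apply, hπ]
  have := (LinearMap.mem_ker).mp h4
  rw [map_sub, sub_eq_zero] at this
  exact this.symm

/-- Existence of a generalized inverse. -/
theorem aux_geninv {V W : Type*} [AddCommGroup V] [Module K V]
    [AddCommGroup W] [Module K W] (d : V →ₗ[K] W) :
    ∃ g : W →ₗ[K] V, ∀ x, d (g (d x)) = d x := by
  obtain ⟨s, hs⟩ := (d.rangeRestrict).exists_rightInverse_of_surjective
      (LinearMap.range_eq_top.mpr d.surjective_rangeRestrict)
  obtain ⟨q, hq⟩ := (LinearMap.range d).exists_isCompl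
  refine ⟨s ∘ₗ (Submodule.linearProjOfIsCompl _ q hq), fun x => ?_⟩
  have hπ : (Submodule.linearProjOfIsCompl _ q hq) (d x) = ⟨d x, LinearMap.mem_range_self d x⟩ :=
    Submodule.linearProjOfIsCompl_apply_left hq ⟨d x, LinearMap.mem_range_self d x⟩
  have h2 : d.rangeRestrict (s ⟨d x, LinearMap.mem_range_self d x⟩)
      = ⟨d x, LinearMap.mem_range_self d x⟩ := by
    have := congrFun (congrArg DFunLike.coe hs) (⟨d x, LinearMap.mem_range_self d x⟩ :
      LinearMap.range d)
    exact this
  have h3 : d (s ⟨d x, LinearMap.mem_range_self d x⟩) = d x := congrArg Subtype.val h2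
  simpa [hπ] using h3

/-- A complement of `p` inside `q` when `p ≤ q`. -/
theorem aux_exists_compl_le {V : Type*} [AddCommGroup V] [Module K V]
    {p q : Submodule K V} (h : p ≤ q) :
    ∃ r : Submodule K V, r ≤ q ∧ p ⊓ r = ⊥ ∧ p ⊔ r = q := by
  obtain ⟨r', hr'⟩ := Submodule.exists_isCompl (p.comap q.subtype)
  refine ⟨r'.map q.subtype, Submodule.map_subtype_le q r', ?_, ?_⟩
  · rw [eq_bot_iff]
    rintro x ⟨hxp, hxr⟩
    obtain ⟨⟨y, hyq⟩, hy, rfl⟩ := hxr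
    have : (⟨y, hyq⟩ : q) ∈ p.comap q.subtype ⊓ r' := ⟨by simpa using hxp, hy⟩
    rw [hr'.inf_eq_bot] at this
    simpa using congrArg Subtype.val this
  · have := congrArg (Submodule.map q.subtype) hr'.sup_eq_top
    rw [Submodule.map_sup, Submodule.map_top, Submodule.range_subtype,
      Submodule.map_comap_eq, Submodule.range_subtype, inf_eq_right.mpr h] at this
    exact this

theorem aux_mem_of_sup {V : Type*} [AddCommGroup V] [Module K V]
    {K1 K2 R : Submodule K V} (hdisj : (K1 ⊔ K2) ⊓ R = ⊥) {z : V}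
    (hz1 : z ∈ K1 ⊔ R) (hz2 : z ∈ K1 ⊔ K2) : z ∈ K1 := by
  obtain ⟨k, hk, r, hr, rfl⟩ := Submodule.mem_sup.mp hz1
  have hrm : r ∈ (K1 ⊔ K2) ⊓ R := by
    constructor
    · have : (k + r) - k ∈ K1 ⊔ K2 := Submodule.sub_mem _ hz2 (Submodule.mem_sup_left hk)
      simpa using this
    · exact hr
  rw [hdisj] at hrm
  simp only [Submodule.mem_bot] at hrm
  subst hrm
  simpa using hk

/-- Core decomposition lemma: writing `a` as a sum of maps with prescribed
range and kernel constraints. -/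
theorem aux_core {V W : Type*} [AddCommGroup V] [Module K V] [AddCommGroup W] [Module K W]
    (a : V →ₗ[K] W) (K1 K2 : Submodule K V) (U1 U2 : Submodule K W)
    (h1 : LinearMap.range a ≤ U1 ⊔ U2) (h2 : K1 ⊓ K2 ≤ LinearMap.ker a)
    (h3 : ∀ x ∈ K2, a x ∈ U1) (h4 : ∀ x ∈ K1, a x ∈ U2) :
    ∃ mm nn : V →ₗ[K] W, a = mm + nn ∧ LinearMap.range mm ≤ U1 ∧ K1 ≤ LinearMap.ker mm ∧
      LinearMap.range nn ≤ U2 ∧ K2 ≤ LinearMap.ker nn := by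
  classical
  -- complement of K1 ⊓ K2 inside K2
  obtain ⟨R2, hR2le, hR2inf, hR2sup⟩ := aux_exists_compl_le (inf_le_right : K1 ⊓ K2 ≤ K2)
  -- complement of K1 ⊔ K2 in V
  obtain ⟨R, hR⟩ := Submodule.exists_isCompl (K1 ⊔ K2)
  have hdisj : (K1 ⊔ K2) ⊓ R = ⊥ := hR.inf_eq_bot
  -- IsCompl R2 (K1 ⊔ R)
  have hc : IsCompl R2 (K1 ⊔ R) := by
    constructor
    · rw [disjoint_iff]
      rw [eq_bot_iff]
      rintro x ⟨hx2, hx1⟩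
      obtain ⟨k, hk, r, hr, rfl⟩ := Submodule.mem_sup.mp hx1
      have hrm : r ∈ (K1 ⊔ K2) ⊓ R := by
        refine ⟨?_, hr⟩
        have : (k + r) - k ∈ K1 ⊔ K2 :=
          Submodule.sub_mem _ (Submodule.mem_sup_right (hR2le hx2)) (Submodule.mem_sup_left hk)
        simpa using this
      rw [hdisj] at hrm
      simp only [Submodule.mem_bot] at hrm
      subst hrm
      have hkK : k + 0 ∈ K1 ⊓ K2 := ⟨by simpa using hk, hR2le hx2⟩
      have : k + 0 ∈ (K1 ⊓ K2) ⊓ R2 := ⟨hkK, hx2⟩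
      rw [hR2inf] at this
      simpa using this
    · rw [codisjoint_iff]
      rw [eq_top_iff]
      intro x _
      have hx : x ∈ (K1 ⊔ K2) ⊔ R := by rw [hR.sup_eq_top]; trivial
      have hK2 : K2 ≤ R2 ⊔ K1 := by
        rw [← hR2sup]
        exact sup_le (le_trans inf_le_left le_sup_right) le_sup_left
      have : (K1 ⊔ K2) ⊔ R ≤ R2 ⊔ (K1 ⊔ R) := by
        apply sup_le
        · apply sup_le
          · exact le_trans le_sup_left le_sup_right
          · exact le_trans hK2 (sup_le le_sup_left (le_trans le_sup_left le_sup_right))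
        · exact le_trans le_sup_right le_sup_right
      exact this hx
  -- projections
  set p2 : V →ₗ[K] V := R2.subtype ∘ₗ Submodule.projectionOnto R2 (K1 ⊔ R) hc with hp2def
  set pR : V →ₗ[K] V := R.subtype ∘ₗ Submodule.projectionOnto R (K1 ⊔ K2) hR.symm with hpRdef
  have hp2_mem : ∀ x, p2 x ∈ R2 := fun x => (Submodule.projectionOnto R2 _ hc x).2
  have hpR_mem : ∀ x, pR x ∈ R := fun x => (Submodule.projectionOnto R _ hR.symm x).2
  have hp2_zero : ∀ x ∈ K1 ⊔ R, p2 x = 0 := by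
    intro x hx
    simp [hp2def, Submodule.projectionOnto_apply_of_mem_right hc hx]
  have hpR_zero : ∀ x ∈ K1 ⊔ K2, pR x = 0 := by
    intro x hx
    simp [hpRdef, Submodule.projectionOnto_apply_of_mem_right hR.symm hx]
  have hp2_ker : ∀ x, x - p2 x ∈ K1 ⊔ R := by
    intro x
    have : Submodule.projectionOnto R2 (K1 ⊔ R) hc (x - p2 x) = 0 := by
      have hfix : Submodule.projectionOnto R2 (K1 ⊔ R) hc (p2 x)
          = Submodule.projectionOnto R2 (K1 ⊔ R) hc x := by
        exact Submodule.projectionOnto_apply_left hc _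
      rw [map_sub, hfix, sub_self]
    rwa [Submodule.projectionOnto_apply_eq_zero_iff] at this
  have hpR_ker : ∀ x, x - pR x ∈ K1 ⊔ K2 := by
    intro x
    have : Submodule.projectionOnto R (K1 ⊔ K2) hR.symm (x - pR x) = 0 := by
      have hfix : Submodule.projectionOnto R (K1 ⊔ K2) hR.symm (pR x)
          = Submodule.projectionOnto R (K1 ⊔ K2) hR.symm x := by
        exact Submodule.projectionOnto_apply_left hR.symm _
      rw [map_sub, hfix, sub_self]
    rwa [Submodule.projectionOnto_apply_eq_zero_iff] at this
  -- the splitting of U1 ⊔ U2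
  set S := U1 ⊔ U2 with hSdef
  set φ : (U1 × U2) →ₗ[K] S :=
    LinearMap.codRestrict S ((U1.subtype).coprod (U2.subtype))
      (fun uv => Submodule.add_mem_sup uv.1.2 uv.2.2) with hφdef
  have hφsurj : LinearMap.range φ = ⊤ := by
    rw [LinearMap.range_eq_top]
    rintro ⟨s, hs⟩
    obtain ⟨u, hu, v, hv, huv⟩ := Submodule.mem_sup.mp hs
    exact ⟨(⟨u, hu⟩, ⟨v, hv⟩), Subtype.ext huv⟩
  obtain ⟨ρ, hρ⟩ := φ.exists_rightInverse_of_surjective hφsurj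
  have hρ_sum : ∀ s : S, ((ρ s).1 : W) + ((ρ s).2 : W) = (s : W) := by
    intro s
    have := congrFun (congrArg DFunLike.coe hρ) s
    exact congrArg Subtype.val this
  set a' : V →ₗ[K] S := a.codRestrict S (fun x => h1 (LinearMap.mem_range_self a x)) with ha'def
  have ha'val : ∀ x, (a' x : W) = a x := fun x => rfl
  -- definition of mm
  set mm : V →ₗ[K] W := a ∘ₗ p2 + U1.subtype ∘ₗ (LinearMap.fst K U1 U2) ∘ₗ ρ ∘ₗ a' ∘ₗ pR
    with hmmdef
  refine ⟨mm, a - mm, by abel, ?_, ?_, ?_, ?_⟩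
  · -- range mm ≤ U1
    rintro y ⟨x, rfl⟩
    have t1 : a (p2 x) ∈ U1 := h3 _ (hR2le (hp2_mem x))
    have t2 : ((ρ (a' (pR x))).1 : W) ∈ U1 := (ρ (a' (pR x))).1.2
    simpa [hmmdef] using Submodule.add_mem _ t1 t2
  · -- K1 ≤ ker mm
    intro x hx
    have e1 : p2 x = 0 := hp2_zero x (Submodule.mem_sup_left hx)
    have e2 : pR x = 0 := hpR_zero x (Submodule.mem_sup_left hx)
    simp [hmmdef, LinearMap.mem_ker, e1, e2]
  · -- range (a - mm) ≤ U2
    rintro y ⟨x, rfl⟩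
    set r := pR x with hrdef
    set t := x - r with htdef
    have htmem : t ∈ K1 ⊔ K2 := hpR_ker x
    have hp2r : p2 r = 0 := hp2_zero r (Submodule.mem_sup_right (hpR_mem x))
    have hp2xt : p2 x = p2 t := by
      rw [htdef, map_sub, hp2r, sub_zero]
    -- t - p2 t ∈ K1
    have htp : t - p2 t ∈ K1 := by
      apply aux_mem_of_sup hdisj (hp2_ker t)
      exact Submodule.sub_mem _ htmem (Submodule.mem_sup_right (hR2le (hp2_mem t)))
    have hB : a t - a (p2 x) ∈ U2 := by
      rw [hp2xt, ← map_sub]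
      exact h4 _ htp
    have hA : a r - ((ρ (a' r)).1 : W) ∈ U2 := by
      have hsum := hρ_sum (a' r)
      rw [ha'val] at hsum
      have : a r - ((ρ (a' r)).1 : W) = ((ρ (a' r)).2 : W) := by
        rw [← hsum]; abel
      rw [this]
      exact (ρ (a' r)).2.2
    have hx_split : a x - mm x = (a t - a (p2 x)) + (a r - ((ρ (a' r)).1 : W)) := by
      have hax : a x = a t + a r := by rw [htdef, map_sub]; abel
      simp only [hmmdef, LinearMap.add_apply, LinearMap.coe_comp, Function.comp_apply]
      rw [hax]
      simp only [← hrdef]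
      abel_nf
      rfl
    simp only [LinearMap.sub_apply]
    rw [hx_split]
    exact Submodule.add_mem _ hB hA
  · -- K2 ≤ ker (a - mm)
    intro x hx
    have e2 : pR x = 0 := hpR_zero x (Submodule.mem_sup_right hx)
    have hy : x - p2 x ∈ K1 := by
      apply aux_mem_of_sup hdisj (hp2_ker x)
      exact Submodule.sub_mem _ (Submodule.mem_sup_right hx)
        (Submodule.mem_sup_right (hR2le (hp2_mem x)))
    have hyk : x - p2 x ∈ K1 ⊓ K2 :=
      ⟨hy, Submodule.sub_mem _ hx (hR2le (hp2_mem x))⟩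
    have hza : a (x - p2 x) = 0 := h2 hyk
    rw [map_sub, sub_eq_zero] at hza
    simp [LinearMap.mem_ker, hmmdef, e2, hza]

theorem aux_range_fromCols {K : Type*} [Field K] {m n₁ n₂ : Type*} [Fintype n₁] [Fintype n₂]
    (A₁ : Matrix m n₁ K) (A₂ : Matrix m n₂ K) :
    LinearMap.range (fromCols A₁ A₂).mulVecLin
      = LinearMap.range A₁.mulVecLin ⊔ LinearMap.range A₂.mulVecLin := by
  ext y
  rw [Submodule.mem_sup]
  constructor
  · rintro ⟨v, rfl⟩
    refine ⟨A₁.mulVec (v ∘ Sum.inl), ⟨v ∘ Sum.inl, rfl⟩, A₂.mulVec (v ∘ Sum.inr),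
      ⟨v ∘ Sum.inr, rfl⟩, ?_⟩
    rw [Matrix.mulVecLin_apply]
    conv_rhs => rw [← Sum.elim_comp_inl_inr v]
    rw [fromCols_mulVec_sumElim]
  · rintro ⟨y₁, ⟨v₁, rfl⟩, y₂, ⟨v₂, rfl⟩, rfl⟩
    exact ⟨Sum.elim v₁ v₂, by simp [Matrix.mulVecLin_apply]⟩

theorem aux_rank_fromCols_iff {m' n' p' : Type*} [Fintype m'] [Fintype n'] [Fintype p']
    [DecidableEq n'] [DecidableEq p']
    (A : Matrix m' n' ℂ) (M : Matrix m' p' ℂ) :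
    (fromCols A M).rank = M.rank ↔ ∃ Z : Matrix p' n' ℂ, M * Z = A := by
  have hrange : LinearMap.range (fromCols A M).mulVecLin
      = LinearMap.range A.mulVecLin ⊔ LinearMap.range M.mulVecLin := aux_range_fromCols A M
  constructor
  · intro hrank
    have hle : LinearMap.range M.mulVecLin
        ≤ LinearMap.range A.mulVecLin ⊔ LinearMap.range M.mulVecLin := le_sup_right
    have heq : LinearMap.range M.mulVecLin
        = LinearMap.range A.mulVecLin ⊔ LinearMap.range M.mulVecLin := by
      apply Submodule.eq_of_le_of_finrank_le hle
      rw [← hrange]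
      exact le_of_eq hrank
    have hA : LinearMap.range A.mulVecLin ≤ LinearMap.range M.mulVecLin := by
      rw [heq]; exact le_sup_left
    obtain ⟨z, hz⟩ := aux_factor_range A.mulVecLin M.mulVecLin hA
    refine ⟨LinearMap.toMatrix' z, ?_⟩
    apply Matrix.toLin'.injective
    rw [Matrix.toLin'_apply', Matrix.toLin'_apply', Matrix.mulVecLin_mul, hz]
    congr 1
    rw [← Matrix.toLin'_apply', Matrix.toLin'_toMatrix']
  · rintro ⟨Z, rfl⟩
    rw [Matrix.rank, Matrix.rank, hrange, sup_eq_right.mpr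
      (by rw [Matrix.mulVecLin_mul]; exact LinearMap.range_comp_le_range _ _)]

theorem aux_rank_fromRows_iff {m' n' p' : Type*} [Fintype m'] [Fintype n'] [Fintype p']
    [DecidableEq n'] [DecidableEq p'] [DecidableEq m']
    (A : Matrix n' m' ℂ) (M : Matrix p' m' ℂ) :
    (fromRows A M).rank = M.rank ↔ ∃ W : Matrix n' p' ℂ, W * M = A := by
  rw [← Matrix.rank_transpose (fromRows A M), ← Matrix.rank_transpose M,
    Matrix.transpose_fromRows, aux_rank_fromCols_iff]
  constructor
  · rintro ⟨Z, hZ⟩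
    refine ⟨Zᵀ, ?_⟩
    have := congrArg Matrix.transpose hZ
    rwa [Matrix.transpose_mul, Matrix.transpose_transpose] at this
  · rintro ⟨W, hW⟩
    refine ⟨Wᵀ, ?_⟩
    have := congrArg Matrix.transpose hW
    rwa [Matrix.transpose_mul] at this

noncomputable def auxF {m' n' p' q' : Type*} [Fintype n'] [Fintype p']
    (A : Matrix m' n' ℂ) (B : Matrix m' p' ℂ) (E : Matrix q' n' ℂ) :
    ((n' → ℂ) × (p' → ℂ)) →ₗ[ℂ] ((m' → ℂ) × (q' → ℂ)) :=
  LinearMap.prod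
    (A.mulVecLin ∘ₗ LinearMap.fst ℂ (n' → ℂ) (p' → ℂ)
      + B.mulVecLin ∘ₗ LinearMap.snd ℂ (n' → ℂ) (p' → ℂ))
    (E.mulVecLin ∘ₗ LinearMap.fst ℂ (n' → ℂ) (p' → ℂ))

theorem aux_rank_fromBlocks_formula {m' n' p' q' : Type*}
    [Fintype m'] [Fintype n'] [Fintype p'] [Fintype q']
    (A : Matrix m' n' ℂ) (B : Matrix m' p' ℂ) (E : Matrix q' n' ℂ) :
    (fromBlocks A B E (0 : Matrix q' p' ℂ)).rank
      = E.rank + Module.finrank ℂ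
          ↥(Submodule.map A.mulVecLin (LinearMap.ker E.mulVecLin)
            ⊔ LinearMap.range B.mulVecLin) := by
  classical
  set F := auxF A B E with hF
  set e1 := LinearEquiv.sumArrowLequivProdArrow n' p' ℂ ℂ with he1
  set e2 := LinearEquiv.sumArrowLequivProdArrow m' q' ℂ ℂ with he2
  have hcomm : F ∘ₗ (e1 : ((n' ⊕ p') → ℂ) →ₗ[ℂ] _)
      = (e2 : ((m' ⊕ q') → ℂ) →ₗ[ℂ] _) ∘ₗ (fromBlocks A B E (0 : Matrix q' p' ℂ)).mulVecLin := by
    refine LinearMap.ext fun v => Prod.ext ?_ ?_ <;>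
      simp [hF, auxF, he1, he2, LinearEquiv.sumArrowLequivProdArrow,
        Equiv.sumArrowEquivProdArrow, Matrix.fromBlocks_mulVec,
        Matrix.mulVecLin_apply, Matrix.zero_mulVec]
  -- step 1 : rank = finrank (range F)
  have hstep1 : (fromBlocks A B E (0 : Matrix q' p' ℂ)).rank
      = Module.finrank ℂ ↥(LinearMap.range F) := by
    have h1 : LinearMap.range F = LinearMap.range (F ∘ₗ (e1 : ((n' ⊕ p') → ℂ) →ₗ[ℂ] _)) :=
      (LinearMap.range_comp_of_range_eq_top F e1.range).symm
    have h2 : LinearMap.range ((e2 : ((m' ⊕ q') → ℂ) →ₗ[ℂ] ((m' → ℂ) × (q' → ℂ)))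
          ∘ₗ (fromBlocks A B E (0 : Matrix q' p' ℂ)).mulVecLin)
        = Submodule.map (e2 : ((m' ⊕ q') → ℂ) →ₗ[ℂ] ((m' → ℂ) × (q' → ℂ)))
            (LinearMap.range (fromBlocks A B E (0 : Matrix q' p' ℂ)).mulVecLin) :=
      LinearMap.range_comp (fromBlocks A B E (0 : Matrix q' p' ℂ)).mulVecLin
        (e2 : ((m' ⊕ q') → ℂ) →ₗ[ℂ] ((m' → ℂ) × (q' → ℂ)))
    rw [Matrix.rank, h1, hcomm, h2, LinearEquiv.finrank_map_eq]
  rw [hstep1]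
  -- step 2
  set g := E.mulVecLin ∘ₗ LinearMap.fst ℂ (n' → ℂ) (p' → ℂ) with hg
  have hgF : g = (LinearMap.snd ℂ (m' → ℂ) (q' → ℂ)) ∘ₗ F := rfl
  have hkerle : LinearMap.ker F ≤ LinearMap.ker g := by
    intro x hx
    rw [hgF]
    simp only [LinearMap.mem_ker, LinearMap.coe_comp, Function.comp_apply] at hx ⊢
    rw [hx]; simp
  have hrangeg : LinearMap.range g = LinearMap.range E.mulVecLin := by
    rw [hg, LinearMap.range_comp_of_range_eq_top]
    exact LinearMap.range_eq_top.mpr Prod.fst_surjective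
  -- the image of ker g under F
  set S := Submodule.map A.mulVecLin (LinearMap.ker E.mulVecLin) ⊔ LinearMap.range B.mulVecLin
    with hS
  have hmap : Submodule.map F (LinearMap.ker g)
      = Submodule.map (LinearMap.inl ℂ (m' → ℂ) (q' → ℂ)) S := by
    ext x
    simp only [Submodule.mem_map]
    constructor
    · rintro ⟨⟨v, u⟩, hvu, heq⟩
      have hvker : v ∈ LinearMap.ker E.mulVecLin := by
        simpa [hg, LinearMap.mem_ker] using hvu
      have hv : E.mulVec v = 0 := by simpa [Matrix.mulVecLin_apply] using hvker
      refine ⟨A.mulVecLin v + B.mulVecLin u,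
        Submodule.add_mem_sup ⟨v, hvker, rfl⟩ ⟨u, rfl⟩, ?_⟩
      rw [← heq]
      simp [hF, auxF, Prod.ext_iff, Matrix.mulVecLin_apply, hv]
    · rintro ⟨y, hy, heq⟩
      obtain ⟨y₁', ⟨v, hv, rfl⟩, y₂', ⟨u, rfl⟩, rfl⟩ := Submodule.mem_sup.mp hy
      have hv0 : E.mulVec v = 0 := by simpa [Matrix.mulVecLin_apply] using hv
      refine ⟨(v, u), by simp [hg, LinearMap.mem_ker, Matrix.mulVecLin_apply, hv0], ?_⟩
      rw [← heq]
      simp [hF, auxF, Prod.ext_iff, Matrix.mulVecLin_apply, hv0]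
  have hfinmap : Module.finrank ℂ ↥(Submodule.map F (LinearMap.ker g))
      = Module.finrank ℂ ↥S := by
    rw [hmap]
    exact (LinearEquiv.finrank_eq
      (Submodule.equivMapOfInjective _ LinearMap.inl_injective S)).symm
  -- rank--nullity bookkeeping
  have hrn1 := LinearMap.finrank_range_add_finrank_ker F
  have hrn2 := LinearMap.finrank_range_add_finrank_ker g
  have hrn3 := LinearMap.finrank_range_add_finrank_ker (F.domRestrict (LinearMap.ker g))
  rw [LinearMap.range_domRestrict] at hrn3
  have hkerdom : Module.finrank ℂ ↥(LinearMap.ker (F.domRestrict (LinearMap.ker g)))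
      = Module.finrank ℂ ↥(LinearMap.ker F) := by
    have h1 : LinearMap.ker (F.domRestrict (LinearMap.ker g))
        = Submodule.comap (LinearMap.ker g).subtype (LinearMap.ker F) := by
      ext x; simp [LinearMap.mem_ker]
    rw [h1]
    exact LinearEquiv.finrank_eq (Submodule.comapSubtypeEquivOfLe hkerle)
  rw [hkerdom, hfinmap] at hrn3
  -- combine
  have hEr : Module.finrank ℂ ↥(LinearMap.range g) = E.rank := by rw [hrangeg]; rfl
  omega
theorem aux_rank_fromBlocks_zero {m' n' p' q' : Type*}
    [Fintype m'] [Fintype n'] [Fintype p'] [Fintype q']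
    (B : Matrix m' p' ℂ) (E : Matrix q' n' ℂ) :
    (fromBlocks (0 : Matrix m' n' ℂ) B E (0 : Matrix q' p' ℂ)).rank = E.rank + B.rank := by
  rw [aux_rank_fromBlocks_formula]
  congr 1
  rw [Matrix.mulVecLin_zero, Submodule.map_zero, bot_sup_eq]
  rfl

theorem aux_rank_fromBlocks_iff {m' n' p' q' : Type*}
    [Fintype m'] [Fintype n'] [Fintype p'] [Fintype q']
    [DecidableEq n'] [DecidableEq p'] [DecidableEq q']
    (A : Matrix m' n' ℂ) (B : Matrix m' p' ℂ) (E : Matrix q' n' ℂ) :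
    (fromBlocks A B E (0 : Matrix q' p' ℂ)).rank
        = (fromBlocks (0 : Matrix m' n' ℂ) B E (0 : Matrix q' p' ℂ)).rank
      ↔ ∃ (Z : Matrix p' n' ℂ) (W : Matrix m' q' ℂ), B * Z + W * E = A := by
  rw [aux_rank_fromBlocks_formula, aux_rank_fromBlocks_zero]
  have hsub : Submodule.map A.mulVecLin (LinearMap.ker E.mulVecLin)
        ≤ LinearMap.range B.mulVecLin
      ↔ ∃ (Z : Matrix p' n' ℂ) (W : Matrix m' q' ℂ), B * Z + W * E = A := by
    constructor
    · intro hle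
      obtain ⟨Q, hQ⟩ := Submodule.exists_isCompl (LinearMap.ker E.mulVecLin)
      set π : (n' → ℂ) →ₗ[ℂ] (n' → ℂ) :=
        (LinearMap.ker E.mulVecLin).subtype
          ∘ₗ Submodule.projectionOnto _ Q hQ with hπ
      set f1 := A.mulVecLin ∘ₗ π with hf1
      have hrange1 : LinearMap.range f1 ≤ LinearMap.range B.mulVecLin := by
        rintro y ⟨x, rfl⟩
        exact hle ⟨π x, (Submodule.projectionOnto _ Q hQ x).2, rfl⟩
      obtain ⟨z, hz⟩ := aux_factor_range f1 B.mulVecLin hrange1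
      have hker2 : LinearMap.ker E.mulVecLin ≤ LinearMap.ker (A.mulVecLin - f1) := by
        intro x hx
        have : π x = x := by
          rw [hπ, LinearMap.comp_apply, Submodule.projectionOnto_apply_of_mem_left hQ hx]; rfl
        simp [LinearMap.mem_ker, hf1, this]
      obtain ⟨w, hw⟩ := aux_factor_ker E.mulVecLin (A.mulVecLin - f1) hker2
      refine ⟨LinearMap.toMatrix' z, LinearMap.toMatrix' w, ?_⟩
      apply Matrix.toLin'.injective
      rw [Matrix.toLin'_apply', Matrix.toLin'_apply', Matrix.mulVecLin_add,
        Matrix.mulVecLin_mul, Matrix.mulVecLin_mul]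
      rw [← Matrix.toLin'_apply' (LinearMap.toMatrix' z), Matrix.toLin'_toMatrix',
        ← Matrix.toLin'_apply' (LinearMap.toMatrix' w), Matrix.toLin'_toMatrix']
      rw [← hz]
      have : w ∘ₗ E.mulVecLin = A.mulVecLin - f1 := hw.symm
      rw [this]
      abel
    · rintro ⟨Z, W, rfl⟩
      rintro y ⟨x, hx, rfl⟩
      have hx0 : E.mulVecLin x = 0 := hx
      refine ⟨Z.mulVec x, ?_⟩
      have : (B * Z + W * E).mulVecLin x
          = B.mulVecLin (Z.mulVecLin x) + W.mulVecLin (E.mulVecLin x) := by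
        rw [Matrix.mulVecLin_add, Matrix.mulVecLin_mul, Matrix.mulVecLin_mul]; rfl
      rw [this, hx0, map_zero, add_zero]
      rfl
  constructor
  · intro h
    apply hsub.mp
    have hcancel : Module.finrank ℂ
        ↥(Submodule.map A.mulVecLin (LinearMap.ker E.mulVecLin)
          ⊔ LinearMap.range B.mulVecLin) = B.rank := by omega
    have heq := Submodule.eq_of_le_of_finrank_le
      (le_sup_right : LinearMap.range B.mulVecLin ≤
        Submodule.map A.mulVecLin (LinearMap.ker E.mulVecLin) ⊔ LinearMap.range B.mulVecLin)
      (le_of_eq hcancel)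
    exact heq ▸ le_sup_left
  · intro h
    have := hsub.mpr h
    rw [sup_eq_right.mpr this]
    rfl
/-- Solvability of the matrix equation `B*X*D + C*Y*E = A`. -/
theorem solvable_BXD_CYE (m n p1 p2 q1 q2 : ℕ)
    (A : Matrix (Fin m) (Fin n) ℂ) (B : Matrix (Fin m) (Fin p1) ℂ)
    (C : Matrix (Fin m) (Fin p2) ℂ) (D : Matrix (Fin q1) (Fin n) ℂ)
    (E : Matrix (Fin q2) (Fin n) ℂ) :
    (∃ (X : Matrix (Fin p1) (Fin q1) ℂ) (Y : Matrix (Fin p2) (Fin q2) ℂ),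
        B * X * D + C * Y * E = A) ↔
      ((fromCols A (fromCols C B)).rank = (fromCols C B).rank ∧
       (fromRows A (fromRows D E)).rank = (fromRows D E).rank ∧
       (fromBlocks A B E 0).rank = (fromBlocks 0 B E 0).rank ∧
       (fromBlocks A C D 0).rank = (fromBlocks 0 C D 0).rank) := by
  classical
  constructor
  · rintro ⟨X, Y, rfl⟩
    refine ⟨?_, ?_, ?_, ?_⟩
    · rw [aux_rank_fromCols_iff]
      refine ⟨fromRows (Y * E) (X * D), ?_⟩
      rw [fromCols_mul_fromRows, ← Matrix.mul_assoc, ← Matrix.mul_assoc]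
      exact add_comm _ _
    · rw [aux_rank_fromRows_iff]
      refine ⟨fromCols (B * X) (C * Y), ?_⟩
      rw [fromCols_mul_fromRows]
    · rw [aux_rank_fromBlocks_iff]
      exact ⟨X * D, C * Y, by rw [← Matrix.mul_assoc]⟩
    · rw [aux_rank_fromBlocks_iff]
      refine ⟨Y * E, B * X, ?_⟩
      rw [← Matrix.mul_assoc]
      exact add_comm _ _
  · rintro ⟨h1, h2, h3, h4⟩
    rw [aux_rank_fromCols_iff] at h1
    rw [aux_rank_fromRows_iff] at h2
    rw [aux_rank_fromBlocks_iff] at h3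
    rw [aux_rank_fromBlocks_iff] at h4
    obtain ⟨Z, hZ⟩ := h1
    obtain ⟨W, hW⟩ := h2
    obtain ⟨Z3, W3, h3'⟩ := h3
    obtain ⟨Z4, W4, h4'⟩ := h4
    -- translate to subspace conditions
    have hA1 : C * Z.toRows₁ + B * Z.toRows₂ = A := by
      rw [← fromCols_mul_fromRows, fromRows_toRows]
      exact hZ
    have hA2 : W.toCols₁ * D + W.toCols₂ * E = A := by
      rw [← fromCols_mul_fromRows, fromCols_toCols]
      exact hW
    have hh1 : LinearMap.range A.mulVecLin
        ≤ LinearMap.range B.mulVecLin ⊔ LinearMap.range C.mulVecLin := by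
      rintro y ⟨v, rfl⟩
      rw [← hA1]
      have : (C * Z.toRows₁ + B * Z.toRows₂).mulVecLin v
          = B.mulVecLin (Z.toRows₂.mulVecLin v) + C.mulVecLin (Z.toRows₁.mulVecLin v) := by
        simp [Matrix.mulVecLin_apply, Matrix.add_mulVec, ← Matrix.mulVec_mulVec, add_comm]
      rw [this]
      exact Submodule.add_mem_sup ⟨_, rfl⟩ ⟨_, rfl⟩
    have hh2 : LinearMap.ker D.mulVecLin ⊓ LinearMap.ker E.mulVecLin
        ≤ LinearMap.ker A.mulVecLin := by
      rintro x ⟨hxd, hxe⟩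
      have hxd0 : D.mulVec x = 0 := hxd
      have hxe0 : E.mulVec x = 0 := hxe
      have : A.mulVecLin x = (W.toCols₁ * D + W.toCols₂ * E).mulVecLin x := by
        rw [hA2]
      rw [LinearMap.mem_ker, this]
      simp [Matrix.mulVecLin_apply, Matrix.add_mulVec, ← Matrix.mulVec_mulVec, hxd0, hxe0]
    have hh3 : ∀ x ∈ LinearMap.ker E.mulVecLin,
        A.mulVecLin x ∈ LinearMap.range B.mulVecLin := by
      intro x hx
      have hxe0 : E.mulVec x = 0 := hx
      have : A.mulVecLin x = (B * Z3 + W3 * E).mulVecLin x := by rw [h3']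
      rw [this]
      refine ⟨Z3.mulVec x, ?_⟩
      simp [Matrix.mulVecLin_apply, Matrix.add_mulVec, ← Matrix.mulVec_mulVec, hxe0]
    have hh4 : ∀ x ∈ LinearMap.ker D.mulVecLin,
        A.mulVecLin x ∈ LinearMap.range C.mulVecLin := by
      intro x hx
      have hxd0 : D.mulVec x = 0 := hx
      have : A.mulVecLin x = (C * Z4 + W4 * D).mulVecLin x := by rw [h4']
      rw [this]
      refine ⟨Z4.mulVec x, ?_⟩
      simp [Matrix.mulVecLin_apply, Matrix.add_mulVec, ← Matrix.mulVec_mulVec, hxd0]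
    obtain ⟨mm, nn, hmn, hmr, hmk, hnr, hnk⟩ :=
      aux_core A.mulVecLin (LinearMap.ker D.mulVecLin) (LinearMap.ker E.mulVecLin)
        (LinearMap.range B.mulVecLin) (LinearMap.range C.mulVecLin) hh1 hh2 hh3 hh4
    -- factor mm through B and D
    obtain ⟨w1, hw1⟩ := aux_factor_ker D.mulVecLin mm hmk
    obtain ⟨g1, hg1⟩ := aux_geninv D.mulVecLin
    have hmm2 : mm = (mm ∘ₗ g1) ∘ₗ D.mulVecLin := by
      ext x
      simp only [LinearMap.coe_comp, Function.comp_apply]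
      rw [hw1]
      simp only [LinearMap.coe_comp, Function.comp_apply]
      rw [hg1]
    obtain ⟨x', hx'⟩ := aux_factor_range (mm ∘ₗ g1) B.mulVecLin
      (le_trans (LinearMap.range_comp_le_range _ _) hmr)
    -- factor nn through C and E
    obtain ⟨w2, hw2⟩ := aux_factor_ker E.mulVecLin nn hnk
    obtain ⟨g2, hg2⟩ := aux_geninv E.mulVecLin
    have hnn2 : nn = (nn ∘ₗ g2) ∘ₗ E.mulVecLin := by
      ext x
      simp only [LinearMap.coe_comp, Function.comp_apply]
      rw [hw2]
      simp only [LinearMap.coe_comp, Function.comp_apply]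
      rw [hg2]
    obtain ⟨y', hy'⟩ := aux_factor_range (nn ∘ₗ g2) C.mulVecLin
      (le_trans (LinearMap.range_comp_le_range _ _) hnr)
    refine ⟨LinearMap.toMatrix' x', LinearMap.toMatrix' y', ?_⟩
    apply Matrix.toLin'.injective
    rw [Matrix.toLin'_apply', Matrix.toLin'_apply', Matrix.mulVecLin_add,
      Matrix.mulVecLin_mul, Matrix.mulVecLin_mul, Matrix.mulVecLin_mul, Matrix.mulVecLin_mul,
      ← Matrix.toLin'_apply' (LinearMap.toMatrix' x'), Matrix.toLin'_toMatrix',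
      ← Matrix.toLin'_apply' (LinearMap.toMatrix' y'), Matrix.toLin'_toMatrix']
    have e1 : (B.mulVecLin ∘ₗ x') ∘ₗ D.mulVecLin = mm := by
      rw [← hx', ← hmm2]
    have e2 : (C.mulVecLin ∘ₗ y') ∘ₗ E.mulVecLin = nn := by
      rw [← hy', ← hnn2]
    rw [e1, e2, ← hmn]
end
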